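/- arXiv:2301.12384 — 11 statements merged into one kernel-verified Lean document; each statement's English description precedes it below -/
import Mathlib

section
/- Let G be a finitely generated group with finite symmetric generating set S acting continuously on a compact metric space X, and let H be a finite-index subgroup of G. If the restricted action of H on X has the persistent shadowing property, then the action of G on X has the persistent shadowing property. -/
open MeasureTheory

def ContGroupAction (G : Type*) [Group G] (X : Type*) [MetricSpace X] (φ : G → X → X) : Prop :=
  (∀ g : G, Continuous (φ g)) ∧ (∀ g h : G, ∀ x : X, φ (g * h) x = φ g (φ h x)) ∧
    (∀ x : X, φ (1 : G) x = x)

def IsPseudoOrbit {G : Type*} [Group G] {X : Type*} [MetricSpace X]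
    (S : Set G) (ψ : G → X → X) (δ : ℝ) (f : G → X) : Prop :=
  ∀ s ∈ S, ∀ g : G, dist (f (s * g)) (ψ s (f g)) < δ

def CloseActions {G : Type*} [Group G] {X : Type*} [MetricSpace X]
    (S : Set G) (φ ψ : G → X → X) (δ : ℝ) : Prop :=
  ∀ s ∈ S, ∀ x : X, dist (φ s x) (ψ s x) < δ

def PersistentShadowing {G : Type*} [Group G] {X : Type*} [MetricSpace X]
    (S : Set G) (φ : G → X → X) : Prop :=
  ∀ ε > (0:ℝ), ∃ δ > (0:ℝ), ∀ ψ : G → X → X, ContGroupAction G X ψ → CloseActions S φ ψ δ →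
    ∀ f : G → X, IsPseudoOrbit S ψ δ f → ∃ p : X, ∀ g : G, dist (f g) (ψ g p) < ε

def Shadowing {G : Type*} [Group G] {X : Type*} [MetricSpace X]
    (S : Set G) (φ : G → X → X) : Prop :=
  ∀ ε > (0:ℝ), ∃ δ > (0:ℝ), ∀ f : G → X, IsPseudoOrbit S φ δ f →
    ∃ p : X, ∀ g : G, dist (f g) (φ g p) < ε

def PShSet {G : Type*} [Group G] {X : Type*} [MetricSpace X]
    (S : Set G) (φ : G → X → X) (δ ε : ℝ) : Set X :=
  {x | ∀ ψ : G → X → X, ContGroupAction G X ψ → CloseActions S φ ψ δ →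
    ∀ f : G → X, IsPseudoOrbit S ψ δ f → f 1 = x →
      ∃ p : X, ∀ g : G, dist (f g) (ψ g p) < ε}

def PShPoint {G : Type*} [Group G] {X : Type*} [MetricSpace X]
    (S : Set G) (φ : G → X → X) (x : X) : Prop :=
  ∀ ε > (0:ℝ), ∃ δ > (0:ℝ), x ∈ PShSet S φ δ ε

def ShPoint {G : Type*} [Group G] {X : Type*} [MetricSpace X]
    (S : Set G) (φ : G → X → X) (x : X) : Prop :=
  ∀ ε > (0:ℝ), ∃ δ > (0:ℝ), ∀ f : G → X, IsPseudoOrbit S φ δ f → f 1 = x →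
    ∃ p : X, ∀ g : G, dist (f g) (φ g p) < ε

def UPersisBetaPoint {G : Type*} [Group G] {X : Type*} [MetricSpace X]
    (S : Set G) (φ : G → X → X) (x : X) : Prop :=
  ∀ ε > (0:ℝ), ∃ δ > (0:ℝ), ∀ ψ : G → X → X, ContGroupAction G X ψ → CloseActions S φ ψ δ →
    ∀ x' : X, dist x' x < δ → ∃ y : X, ∀ g : G, dist (φ g x') (ψ g y) < ε

def BetaPersistent {G : Type*} [Group G] {X : Type*} [MetricSpace X]
    (S : Set G) (φ : G → X → X) : Prop :=
  ∀ ε > (0:ℝ), ∃ δ > (0:ℝ), ∀ ψ : G → X → X, ContGroupAction G X ψ → CloseActions S φ ψ δ →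
    ∀ x : X, ∃ y : X, ∀ g : G, dist (φ g x) (ψ g y) < ε

def CompatiblePSh {G : Type*} [Group G] {X : Type*} [MetricSpace X] [MeasurableSpace X]
    (S : Set G) (φ : G → X → X) (μ : Measure X) : Prop :=
  ∀ ε > (0:ℝ), ∃ δ > (0:ℝ), ∀ A : Set X, MeasurableSet A → 0 < μ A →
    (A ∩ PShSet S φ δ ε).Nonempty

def MeasSupp {X : Type*} [MetricSpace X] [MeasurableSpace X] (μ : Measure X) : Set X :=
  {x | ∀ U : Set X, IsOpen U → x ∈ U → 0 < μ U}


lemma aux_unif {G : Type*} {X : Type*} [MetricSpace X] [CompactSpace X]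
    (S : Set G) (hS : S.Finite) (φ : G → X → X) (hc : ∀ g, Continuous (φ g)) :
    ∀ ε > (0:ℝ), ∃ δ > (0:ℝ), ∀ s ∈ S, ∀ x y : X, dist x y < δ → dist (φ s x) (φ s y) < ε := by
  intro ε hε
  classical
  have key : ∀ F : Finset G, ∃ δ > (0:ℝ), ∀ s ∈ F, ∀ x y : X, dist x y < δ →
      dist (φ s x) (φ s y) < ε := by
    intro F
    induction F using Finset.induction_on with
    | empty => exact ⟨1, one_pos, by simp⟩
    | @insert a T ha ih =>
      obtain ⟨δ₁, hδ₁, h1⟩ := ih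
      have hu : UniformContinuous (φ a) := CompactSpace.uniformContinuous_of_continuous (hc a)
      obtain ⟨δ₂, hδ₂, h2⟩ := Metric.uniformContinuous_iff.mp hu ε hε
      refine ⟨min δ₁ δ₂, lt_min hδ₁ hδ₂, ?_⟩
      intro s hs x y hxy
      rcases Finset.mem_insert.mp hs with rfl | hs
      · exact h2 (hxy.trans_le (min_le_right _ _))
      · exact h1 s hs x y (hxy.trans_le (min_le_left _ _))
  obtain ⟨δ, hδ, h⟩ := key hS.toFinset
  exact ⟨δ, hδ, fun s hs => h s (hS.mem_toFinset.mpr hs)⟩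

lemma aux_word {G : Type*} [Group G] (S : Set G) (hSsym : ∀ s ∈ S, s⁻¹ ∈ S)
    (hSgen : Subgroup.closure S = ⊤) (g : G) :
    ∃ l : List G, (∀ x ∈ l, x ∈ S) ∧ l.prod = g := by
  have hg : g ∈ (Subgroup.closure S).toSubmonoid := by rw [hSgen]; trivial
  rw [Subgroup.closure_toSubmonoid] at hg
  obtain ⟨l, hl, hprod⟩ := Submonoid.exists_list_of_mem_closure hg
  refine ⟨l, fun y hy => ?_, hprod⟩
  rcases hl y hy with h | h
  · exact h
  · have := hSsym _ (Set.mem_inv.mp h)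
    simpa using this

lemma aux_reps {G : Type*} [Group G] (S : Set G) (hSsym : ∀ s ∈ S, s⁻¹ ∈ S)
    (hSgen : Subgroup.closure S = ⊤) (H : Subgroup G) (hH : H.FiniteIndex) :
    ∃ n : ℕ, ∀ g : G, ∃ (l : List G) (h : G), (∀ x ∈ l, x ∈ S) ∧ l.length ≤ n ∧ h ∈ H ∧
      g = l.prod * h := by
  haveI := hH
  haveI : Finite (G ⧸ H) := H.finite_quotient_of_finiteIndex
  haveI : Fintype (G ⧸ H) := Fintype.ofFinite _
  choose L hL1 hL2 using fun q : G ⧸ H => aux_word S hSsym hSgen q.out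
  refine ⟨Finset.univ.sup (fun q => (L q).length), fun g => ?_⟩
  set q : G ⧸ H := QuotientGroup.mk g with hq
  refine ⟨L q, (L q).prod⁻¹ * g, hL1 q, Finset.le_sup (f := fun q => (L q).length) (Finset.mem_univ q), ?_, ?_⟩
  · rw [hL2 q]
    have hout : (QuotientGroup.mk q.out : G ⧸ H) = QuotientGroup.mk g :=
      QuotientGroup.out_eq' q
    exact (QuotientGroup.eq).mp hout
  · rw [mul_inv_cancel_left]

theorem stmt0 {G : Type*} [Group G] {X : Type*} [MetricSpace X] [CompactSpace X]
    (S : Set G) (hSfin : S.Finite) (hSsym : ∀ s ∈ S, s⁻¹ ∈ S)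
    (hSgen : Subgroup.closure S = ⊤)
    (φ : G → X → X) (hφ : ContGroupAction G X φ)
    (H : Subgroup G) (hH : H.FiniteIndex)
    (A : Set H) (hAfin : A.Finite) (hAsym : ∀ a ∈ A, a⁻¹ ∈ A)
    (hAgen : Subgroup.closure A = ⊤) (hAS : ∀ a ∈ A, (a : G) ∈ S)
    (hrest : PersistentShadowing A (fun (h : H) => φ (h : G))) :
    PersistentShadowing S φ := by
  classical
  obtain ⟨n, hn⟩ := aux_reps S hSsym hSgen H hH
  have hunif := aux_unif S hSfin φ hφ.1
  have huex : ∀ α : ℝ, ∃ δ : ℝ, 0 < δ ∧ (0 < α → ∀ s ∈ S, ∀ x y : X, dist x y < δ →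
      dist (φ s x) (φ s y) < α) := by
    intro α
    by_cases hα : 0 < α
    · obtain ⟨δ, hδ, h⟩ := hunif α hα
      exact ⟨δ, hδ, fun _ => h⟩
    · exact ⟨1, one_pos, fun h => absurd h hα⟩
  choose u hu1 hu2 using huex
  intro ε hε
  set e : ℕ → ℝ := fun k => Nat.rec ε (fun _ ek => min (ek / 4) (u (ek / 4))) k with he
  have he0 : e 0 = ε := rfl
  have hes : ∀ k, e (k + 1) = min (e k / 4) (u (e k / 4)) := fun k => rfl
  have hepos : ∀ k, 0 < e k := by
    intro k
    induction k with
    | zero => exact hε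
    | succ k ih => rw [hes]; exact lt_min (by linarith) (hu1 _)
  have hdec : ∀ k, e (k + 1) ≤ e k := by
    intro k
    rw [hes]
    exact (min_le_left _ _).trans (by linarith [hepos k])
  have hmono : ∀ j k, j ≤ k → e k ≤ e j := by
    intro j k hjk
    induction k with
    | zero => simp_all
    | succ k ih =>
      rcases Nat.lt_or_ge j (k + 1) with h | h
      · exact (hdec k).trans (ih (Nat.lt_succ_iff.mp h))
      · have : j = k + 1 := le_antisymm hjk h
        simp [this]
  obtain ⟨δH, hδH, hHsh⟩ := hrest (e n) (hepos n)
  refine ⟨min δH (e n / 4), lt_min hδH (by linarith [hepos n]), ?_⟩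
  intro ψ hψ hclose f hf
  set δ : ℝ := min δH (e n / 4) with hδdef
  have hδ4 : δ ≤ e n / 4 := min_le_right _ _
  have hψH : ContGroupAction H X (fun h : H => ψ (h : G)) := by
    refine ⟨fun h => hψ.1 h, fun a b x => ?_, fun x => ?_⟩
    · show ψ ((a * b : H) : G) x = _
      rw [Subgroup.coe_mul]
      exact hψ.2.1 _ _ _
    · show ψ ((1 : H) : G) x = x
      rw [OneMemClass.coe_one]
      exact hψ.2.2 x
  have hcloseH : CloseActions A (fun h : H => φ (h : G)) (fun h : H => ψ (h : G)) δH :=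
    fun a ha x => (hclose _ (hAS a ha) x).trans_le (min_le_left _ _)
  have hfH : IsPseudoOrbit A (fun h : H => ψ (h : G)) δH (fun h : H => f (h : G)) := by
    intro a ha h
    have := (hf _ (hAS a ha) h).trans_le (min_le_left _ _)
    simpa [Subgroup.coe_mul] using this
  obtain ⟨p, hp⟩ := hHsh _ hψH hcloseH _ hfH
  have hstep : ∀ k, k + 1 ≤ n → ∀ s ∈ S, ∀ g' : G, dist (f g') (ψ g' p) < e (k + 1) →
      dist (f (s * g')) (ψ (s * g') p) < e k := by
    intro k hk s hs g' hg'
    have h1 : dist (f (s * g')) (ψ s (f g')) < δ := hf s hs g'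
    have h2 : dist (ψ s (f g')) (ψ s (ψ g' p)) ≤
        dist (ψ s (f g')) (φ s (f g')) + dist (φ s (f g')) (φ s (ψ g' p)) +
          dist (φ s (ψ g' p)) (ψ s (ψ g' p)) := dist_triangle4 _ _ _ _
    have h3 : dist (ψ s (f g')) (φ s (f g')) < δ := by
      rw [dist_comm]; exact hclose s hs _
    have h4 : dist (φ s (ψ g' p)) (ψ s (ψ g' p)) < δ := hclose s hs _
    have h5 : dist (φ s (f g')) (φ s (ψ g' p)) < e k / 4 := by
      refine hu2 (e k / 4) (by linarith [hepos k]) s hs _ _ ?_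
      calc dist (f g') (ψ g' p) < e (k + 1) := hg'
        _ ≤ u (e k / 4) := by rw [hes]; exact min_le_right _ _
    have hmul : ψ (s * g') p = ψ s (ψ g' p) := hψ.2.1 s g' p
    have hδk : δ ≤ e k / 4 := hδ4.trans (by linarith [hmono k n (Nat.le_of_succ_le hk)])
    have htri : dist (f (s * g')) (ψ (s * g') p) ≤
        dist (f (s * g')) (ψ s (f g')) + dist (ψ s (f g')) (ψ (s * g') p) := dist_triangle _ _ _
    rw [hmul] at htri ⊢
    linarith
  have hlist : ∀ l : List G, (∀ x ∈ l, x ∈ S) → l.length ≤ n → ∀ h : G, h ∈ H →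
      dist (f (l.prod * h)) (ψ (l.prod * h) p) < e (n - l.length) := by
    intro l
    induction l with
    | nil =>
      intro _ _ h hh
      simpa using hp ⟨h, hh⟩
    | cons s l' ih =>
      intro hmem hlen h hh
      have hlen1 : l'.length + 1 ≤ n := by simpa using hlen
      have key := ih (fun x hx => hmem x (List.mem_cons_of_mem s hx)) (by omega) h hh
      have hm : n - l'.length = (n - (l'.length + 1)) + 1 := by omega
      rw [hm] at key
      have := hstep (n - (l'.length + 1)) (by omega) s (hmem s (List.mem_cons_self (a := s) (l := l')))
        (l'.prod * h) key
      have heq : (s :: l').prod * h = s * (l'.prod * h) := by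
        rw [List.prod_cons, mul_assoc]
      rw [heq]
      simpa using this
  refine ⟨p, fun g => ?_⟩
  obtain ⟨l, h, hlS, hlen, hhH, rfl⟩ := hn g
  calc dist (f (l.prod * h)) (ψ (l.prod * h) p) < e (n - l.length) := hlist l hlS hlen h hhH
    _ ≤ e 0 := hmono 0 _ (Nat.zero_le _)
    _ = ε := he0
end

section
/- Let G be a finitely generated group with finite symmetric generating set S acting continuously on a compact metric space X, and let H be a finite-index subgroup of G. If the restricted action of H on X has the shadowing property, then the action of G on X has the shadowing property. -/
open MeasureTheory

private lemma ucont_aux {G : Type*} [Group G] {X : Type*} [MetricSpace X] [CompactSpace X]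
    (φ : G → X → X) (hφ : ContGroupAction G X φ) (g : G) {ε : ℝ} (hε : 0 < ε) :
    ∃ η > (0:ℝ), ∀ x y : X, dist x y < η → dist (φ g x) (φ g y) < ε := by
  have hc : UniformContinuous (φ g) :=
    CompactSpace.uniformContinuous_of_continuous (hφ.1 g)
  rcases Metric.uniformContinuous_iff.mp hc ε hε with ⟨η, hη, h⟩
  exact ⟨η, hη, fun x y hxy => h hxy⟩

private lemma pseudo_mono {G : Type*} [Group G] {X : Type*} [MetricSpace X]
    {S : Set G} {φ : G → X → X} {δ δ' : ℝ} (hδ : δ ≤ δ') {f : G → X}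
    (hf : IsPseudoOrbit S φ δ f) : IsPseudoOrbit S φ δ' f :=
  fun s hs g => lt_of_lt_of_le (hf s hs g) hδ

private lemma key_track {G : Type*} [Group G] {X : Type*} [MetricSpace X] [CompactSpace X]
    (S : Set G) (hSgen : Subgroup.closure S = ⊤)
    (φ : G → X → X) (hφ : ContGroupAction G X φ) (g : G) :
    ∀ ε > (0:ℝ), ∃ δ > (0:ℝ), ∀ f : G → X, IsPseudoOrbit S φ δ f →
      ∀ g' : G, dist (f (g * g')) (φ g (f g')) < ε := by
  have hg : g ∈ Subgroup.closure S := by rw [hSgen]; exact Subgroup.mem_top g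
  induction hg using Subgroup.closure_induction with
  | mem s hs =>
    intro ε hε
    exact ⟨ε, hε, fun f hf g' => hf s hs g'⟩
  | one =>
    intro ε hε
    refine ⟨1, one_pos, fun f hf g' => ?_⟩
    rw [one_mul, hφ.2.2]
    simpa using hε
  | mul x y hx hy ihx ihy =>
    intro ε hε
    rcases ucont_aux φ hφ x (half_pos hε) with ⟨η, hη, hcont⟩
    rcases ihx (ε / 2) (half_pos hε) with ⟨δ₁, hδ₁, h₁⟩
    rcases ihy η hη with ⟨δ₂, hδ₂, h₂⟩
    refine ⟨min δ₁ δ₂, lt_min hδ₁ hδ₂, fun f hf g' => ?_⟩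
    have hf₁ := pseudo_mono (min_le_left δ₁ δ₂) hf
    have hf₂ := pseudo_mono (min_le_right δ₁ δ₂) hf
    have e1 : dist (f (x * (y * g'))) (φ x (f (y * g'))) < ε / 2 := h₁ f hf₁ (y * g')
    have e2 : dist (φ x (f (y * g'))) (φ x (φ y (f g'))) < ε / 2 :=
      hcont _ _ (h₂ f hf₂ g')
    have : dist (f (x * y * g')) (φ (x * y) (f g')) ≤
        dist (f (x * (y * g'))) (φ x (f (y * g'))) +
        dist (φ x (f (y * g'))) (φ x (φ y (f g'))) := by
      rw [mul_assoc, hφ.2.1]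
      exact dist_triangle _ _ _
    linarith
  | inv x hx ihx =>
    intro ε hε
    rcases ucont_aux φ hφ x⁻¹ hε with ⟨η, hη, hcont⟩
    rcases ihx η hη with ⟨δ, hδ, h⟩
    refine ⟨δ, hδ, fun f hf g' => ?_⟩
    have := h f hf (x⁻¹ * g')
    rw [mul_inv_cancel_left] at this
    have h2 : dist (φ x⁻¹ (f g')) (φ x⁻¹ (φ x (f (x⁻¹ * g')))) < ε := hcont _ _ this
    have h3 : φ x⁻¹ (φ x (f (x⁻¹ * g'))) = f (x⁻¹ * g') := by
      rw [← hφ.2.1, inv_mul_cancel, hφ.2.2]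
    rw [h3] at h2
    rw [dist_comm]
    exact h2

theorem stmt1 {G : Type*} [Group G] {X : Type*} [MetricSpace X] [CompactSpace X]
    (S : Set G) (hSfin : S.Finite) (hSsym : ∀ s ∈ S, s⁻¹ ∈ S)
    (hSgen : Subgroup.closure S = ⊤)
    (φ : G → X → X) (hφ : ContGroupAction G X φ)
    (H : Subgroup G) (hH : H.FiniteIndex)
    (A : Set H) (hAfin : A.Finite) (hAsym : ∀ a ∈ A, a⁻¹ ∈ A)
    (hAgen : Subgroup.closure A = ⊤) (hAS : ∀ a ∈ A, (a : G) ∈ S)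
    (hrest : Shadowing A (fun (h : H) => φ (h : G))) :
    Shadowing S φ := by
  haveI := hH
  haveI : Fintype (G ⧸ H) := Fintype.ofFinite _
  haveI : Nonempty (G ⧸ H) := ⟨QuotientGroup.mk 1⟩
  intro ε hε
  -- uniform continuity modulus for each coset representative
  have hucont : ∀ q : G ⧸ H, ∃ η > (0:ℝ), ∀ x y : X, dist x y < η →
      dist (φ q.out x) (φ q.out y) < ε / 2 :=
    fun q => ucont_aux φ hφ q.out (half_pos hε)
  choose η hηpos hηc using hucont
  set ε₁ : ℝ := min (ε / 2) (Finset.univ.inf' Finset.univ_nonempty η) with hε₁def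
  have hε₁pos : 0 < ε₁ := by
    apply lt_min (half_pos hε)
    rw [Finset.lt_inf'_iff]
    exact fun q _ => hηpos q
  -- shadowing constant for the subgroup action
  rcases hrest ε₁ hε₁pos with ⟨δ₁, hδ₁pos, hδ₁⟩
  -- tracking constants for each representative
  have htrack : ∀ q : G ⧸ H, ∃ δ > (0:ℝ), ∀ f : G → X, IsPseudoOrbit S φ δ f →
      ∀ g' : G, dist (f (q.out * g')) (φ q.out (f g')) < ε / 2 :=
    fun q => key_track S hSgen φ hφ q.out (ε / 2) (half_pos hε)
  choose δq hδqpos hδq using htrack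
  set δ₂ : ℝ := Finset.univ.inf' Finset.univ_nonempty δq with hδ₂def
  have hδ₂pos : 0 < δ₂ := by
    rw [hδ₂def, Finset.lt_inf'_iff]
    exact fun q _ => hδqpos q
  refine ⟨min δ₁ δ₂, lt_min hδ₁pos hδ₂pos, fun f hf => ?_⟩
  -- restriction of f to H is a pseudo-orbit for the subgroup action
  have hfH : IsPseudoOrbit A (fun (h : H) => φ (h : G)) δ₁ (fun h : H => f (h : G)) := by
    intro a ha h
    have := pseudo_mono (min_le_left δ₁ δ₂) hf (a : G) (hAS a ha) (h : G)
    simpa using this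
  rcases hδ₁ _ hfH with ⟨p, hp⟩
  refine ⟨p, fun g => ?_⟩
  set q : G ⧸ H := QuotientGroup.mk g with hq
  have hmem : q.out⁻¹ * g ∈ H := QuotientGroup.eq.mp (QuotientGroup.out_eq' q)
  set h : H := ⟨q.out⁻¹ * g, hmem⟩ with hh
  have hgdecomp : g = q.out * (h : G) := by
    simp [hh, mul_inv_cancel_left]
  have e1 : dist (f (q.out * (h : G))) (φ q.out (f (h : G))) < ε / 2 :=
    hδq q f (pseudo_mono (le_trans (min_le_right δ₁ δ₂)
      (Finset.inf'_le _ (Finset.mem_univ q))) hf) (h : G)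
  have e2' : dist (f (h : G)) (φ (h : G) p) < ε₁ := hp h
  have hε₁η : ε₁ ≤ η q := min_le_of_right_le (Finset.inf'_le _ (Finset.mem_univ q))
  have e2 : dist (φ q.out (f (h : G))) (φ q.out (φ (h : G) p)) < ε / 2 :=
    hηc q _ _ (lt_of_lt_of_le e2' hε₁η)
  have key : dist (f g) (φ g p) ≤
      dist (f (q.out * (h : G))) (φ q.out (f (h : G))) +
      dist (φ q.out (f (h : G))) (φ q.out (φ (h : G) p)) := by
    conv_lhs => rw [hgdecomp, hφ.2.1]
    exact dist_triangle _ _ _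
  linarith
end

section
/- Let F₂ = ⟨a,b⟩ be the free group on two generators acting continuously on a compact metric space X via φ. If φ has the persistent shadowing property, then the homeomorphism φ_{a⁻¹b}: X → X (the action of the element a⁻¹b) has the persistent shadowing property as a single homeomorphism. -/
open MeasureTheory

def HomeoPersistentShadowing {X : Type*} [MetricSpace X] (T : X → X) : Prop :=
  ∀ ε > (0:ℝ), ∃ δ > (0:ℝ), ∀ T' : X ≃ X, Continuous T' → Continuous T'.symm →
    (∀ x : X, dist (T x) (T' x) < δ) →
    ∀ x : ℤ → X, (∀ n : ℤ, dist (T' (x n)) (x (n + 1)) < δ) →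
      ∃ y : X, ∀ n : ℤ, dist ((T' ^ n) y) (x n) < ε


namespace Stmt3Aux
open FreeGroup
open scoped Classical

def mrev : List (Bool × Bool) → ℤ
  | [] => 0
  | (false, s) :: l => (if s then 1 else -1) + mrev l
  | (true, s) :: _ => if s then -1 else 0

lemma mrev_append_of_true : ∀ (R : List (Bool × Bool)), (∃ y ∈ R, y.1 = true) →
    ∀ P, mrev (R ++ P) = mrev R
  | [], h, _ => by simp at h
  | (true, _) :: _, _, _ => rfl
  | (false, s) :: l, h, P => by
      have h' : ∃ y ∈ l, y.1 = true := by
        rcases h with ⟨y, hy, hy1⟩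
        rcases List.mem_cons.1 hy with h1 | h2
        · subst h1; simp at hy1
        · exact ⟨y, h2, hy1⟩
      show (if s then (1:ℤ) else -1) + mrev (l ++ P) = (if s then (1:ℤ) else -1) + mrev l
      rw [mrev_append_of_true l h' P]

lemma mrev_append_of_false : ∀ (R : List (Bool × Bool)), (∀ y ∈ R, y.1 = false) →
    ∀ P, mrev (R ++ P) = mrev R + mrev P
  | [], _, P => by show mrev P = 0 + mrev P; rw [zero_add]
  | (true, s) :: _, h, _ => absurd (h (true, s) (List.mem_cons_self)) (by simp)
  | (false, s) :: l, h, P => by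
      have h' : ∀ y ∈ l, y.1 = false := fun y hy => h y (List.mem_cons_of_mem _ hy)
      show (if s then (1:ℤ) else -1) + mrev (l ++ P) =
        (if s then (1:ℤ) else -1) + mrev l + mrev P
      rw [mrev_append_of_false l h' P]; ring

def mval (g : FreeGroup Bool) : ℤ := mrev g.toWord.reverse

lemma reduce_tail {hd : Bool × Bool} {tl : List (Bool × Bool)}
    (h : reduce (hd :: tl) = hd :: tl) : reduce tl = tl := by
  rw [reduce.cons] at h
  cases htl : reduce tl with
  | nil =>
    rw [htl] at h
    dsimp only at h
    have htl' : tl = [] := by injection h with _ h2; exact h2.symm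
    simp [htl']
  | cons hd2 tl2 =>
    rw [htl] at h
    dsimp only at h
    by_cases hc : hd.1 = hd2.1 ∧ hd.2 = !hd2.2
    · rw [if_pos hc] at h
      exfalso
      have hlen : (reduce tl).length ≤ tl.length := Red.length_le reduce.red
      rw [htl] at hlen
      have h2 : tl2.length = tl.length + 1 := by rw [h]; rfl
      simp only [List.length_cons, h2] at hlen
      omega
    · rw [if_neg hc] at h
      have h3 : tl = hd2 :: tl2 := by injection h with _ h2; exact h2.symm
      rw [h3, ← htl, h3]

lemma toWord_letter_mul (x s : Bool) (g : FreeGroup Bool)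
    (h : g.toWord.head? ≠ some (x, !s)) :
    (FreeGroup.mk [(x, s)] * g).toWord = (x, s) :: g.toWord := by
  conv_lhs => rw [← mk_toWord (x := g)]
  rw [mul_mk, List.singleton_append, toWord_mk, reduce.cons, reduce_toWord]
  cases hL : g.toWord with
  | nil => rfl
  | cons hd tl =>
    have hne : hd ≠ (x, !s) := by
      intro he; apply h; rw [hL, he]; rfl
    dsimp only
    rw [if_neg]
    rintro ⟨h1, h2⟩
    apply hne
    obtain ⟨y, t⟩ := hd
    simp only at h1 h2
    subst h1
    have ht : t = !s := by rw [h2, Bool.not_not]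
    rw [ht]

lemma mk_letter_cancel (x s : Bool) (L : List (Bool × Bool)) :
    FreeGroup.mk [(x, s)] * FreeGroup.mk ((x, !s) :: L) = FreeGroup.mk L := by
  rw [mul_mk, List.singleton_append]
  exact Quot.sound (@Red.Step.not _ [] L x s)

lemma cancel_case (x s : Bool) (g : FreeGroup Bool) (L : List (Bool × Bool))
    (hw : g.toWord = (x, !s) :: L) :
    (FreeGroup.mk [(x, s)] * g).toWord = L := by
  have hg : g = FreeGroup.mk ((x, !s) :: L) := by rw [← hw, mk_toWord]
  rw [hg, mk_letter_cancel, toWord_mk]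
  have hred : reduce ((x, !s) :: L) = (x, !s) :: L := by
    rw [← hw]; exact reduce_toWord g
  exact reduce_tail hred


/-- `γ` plays the role of the generator `c = a⁻¹ b` in transported coordinates. -/
noncomputable def γ : FreeGroup Bool := FreeGroup.of false
noncomputable def α : FreeGroup Bool := FreeGroup.of true

lemma alpha_eq_mk : α = FreeGroup.mk [(true, true)] := rfl
lemma gamma_eq_mk : γ = FreeGroup.mk [(false, true)] := rfl
lemma gamma_inv_eq_mk : γ⁻¹ = FreeGroup.mk [(false, false)] := by
  rw [gamma_eq_mk, inv_mk]; rfl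

lemma gpow_nat (k : ℕ) : γ ^ k = FreeGroup.mk (List.replicate k (false, true)) := by
  induction k with
  | zero => rfl
  | succ n ih =>
    rw [pow_succ', ih, gamma_eq_mk, mul_mk, List.replicate_succ]
    rfl

lemma gpow_neg_nat (k : ℕ) : γ ^ (-(k : ℤ)) = FreeGroup.mk (List.replicate k (false, false)) := by
  rw [zpow_neg, zpow_natCast, gpow_nat, inv_mk]
  congr 1
  simp [invRev]

lemma toWord_gpow_nat (k : ℕ) : (γ ^ k).toWord = List.replicate k (false, true) := by
  rw [gpow_nat, toWord_mk, reduce_replicate]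

lemma toWord_gpow_neg_nat (k : ℕ) :
    (γ ^ (-(k : ℤ))).toWord = List.replicate k (false, false) := by
  rw [gpow_neg_nat, toWord_mk, reduce_replicate]

lemma mrev_replicate (k : ℕ) (s : Bool) :
    mrev (List.replicate k (false, s)) = k * (if s then 1 else -1) := by
  induction k with
  | zero => simp [mrev]
  | succ n ih =>
    rw [List.replicate_succ]
    show (if s then (1:ℤ) else -1) + mrev (List.replicate n (false, s)) = _
    rw [ih]
    push_cast
    ring

lemma mval_gpow (n : ℤ) : mval (γ ^ n) = n := by
  rcases n with k | k
  · show mval (γ ^ ((k : ℤ))) = k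
    rw [zpow_natCast, mval, toWord_gpow_nat, List.reverse_replicate, mrev_replicate]
    simp
  · show mval (γ ^ (-((k+1 : ℕ) : ℤ))) = _
    rw [mval, toWord_gpow_neg_nat, List.reverse_replicate, mrev_replicate]
    simp [Int.negSucc_eq]

lemma pure_of_allFalse : ∀ (L : List (Bool × Bool)), (∀ y ∈ L, y.1 = false) →
    ∃ n : ℤ, FreeGroup.mk L = γ ^ n
  | [], _ => ⟨0, rfl⟩
  | (x, s) :: l, h => by
    have hx : x = false := h (x, s) (List.mem_cons_self)
    subst hx
    obtain ⟨n, hn⟩ := pure_of_allFalse l (fun y hy => h y (List.mem_cons_of_mem _ hy))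
    refine ⟨(if s then 1 else -1) + n, ?_⟩
    have : FreeGroup.mk ((false, s) :: l) = FreeGroup.mk [(false, s)] * FreeGroup.mk l := by
      rw [mul_mk]; rfl
    rw [this, hn, zpow_add]
    congr 1
    cases s
    · rw [← gamma_inv_eq_mk]; simp
    · rw [← gamma_eq_mk]; simp

lemma allFalse_iff_pure (g : FreeGroup Bool) :
    (∀ y ∈ g.toWord, y.1 = false) ↔ ∃ n : ℤ, g = γ ^ n := by
  constructor
  · intro h
    have := pure_of_allFalse g.toWord h
    rwa [mk_toWord] at this
  · rintro ⟨n, rfl⟩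
    rcases n with k | k
    · rw [show (Int.ofNat k) = ((k:ℕ):ℤ) from rfl, zpow_natCast, toWord_gpow_nat]
      intro y hy
      rw [List.eq_of_mem_replicate hy]
    · rw [show (Int.negSucc k) = -((k+1 : ℕ) : ℤ) from rfl, toWord_gpow_neg_nat]
      intro y hy
      rw [List.eq_of_mem_replicate hy]

lemma mval_alpha_mul (g : FreeGroup Bool) :
    mval (α * g) = if ∃ n : ℤ, g = γ ^ n then mval g - 1 else mval g := by
  by_cases hp : ∀ y ∈ g.toWord, y.1 = false
  · rw [if_pos ((allFalse_iff_pure g).1 hp)]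
    have hhead : g.toWord.head? ≠ some (true, !true) := by
      intro hc
      have hm : (true, !true) ∈ g.toWord := List.mem_of_mem_head? (by rw [hc]; rfl)
      have := hp _ hm
      simp at this
    have hw : (α * g).toWord = (true, true) :: g.toWord := by
      rw [alpha_eq_mk]; exact toWord_letter_mul true true g hhead
    simp only [mval]
    rw [hw, List.reverse_cons,
      mrev_append_of_false _ (fun y hy => hp _ (List.mem_reverse.1 hy)) _]
    show mrev g.toWord.reverse + (-1 : ℤ) = mrev g.toWord.reverse - 1
    ring
  · have hpure : ¬ ∃ n : ℤ, g = γ ^ n := fun h => hp ((allFalse_iff_pure g).2 h)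
    rw [if_neg hpure]
    push_neg at hp
    obtain ⟨z, hz, hz1⟩ := hp
    have hz1' : z.1 = true := by simpa using hz1
    cases hL : g.toWord with
    | nil => rw [hL] at hz; simp at hz
    | cons hd tl =>
      by_cases hc : hd = (true, false)
      · have hw : (α * g).toWord = tl := by
          rw [alpha_eq_mk]
          exact cancel_case true true g tl (by simp [hL, hc])
        simp only [mval]
        rw [hw, hL, List.reverse_cons]
        by_cases ht : ∀ y ∈ tl, y.1 = false
        · rw [mrev_append_of_false _ (fun y hy => ht _ (List.mem_reverse.1 hy)) _, hc]
          show mrev tl.reverse = mrev tl.reverse + (0:ℤ)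
          ring
        · push_neg at ht
          obtain ⟨w, hw2, hw3⟩ := ht
          rw [mrev_append_of_true _ ⟨w, List.mem_reverse.2 hw2, by simpa using hw3⟩ _]
      · have hhead : g.toWord.head? ≠ some (true, !true) := by
          rw [hL]
          intro hcc
          simp only [List.head?_cons, Option.some_inj] at hcc
          exact hc (by simp [hcc])
        have hw : (α * g).toWord = (true, true) :: g.toWord := by
          rw [alpha_eq_mk]; exact toWord_letter_mul true true g hhead
        simp only [mval]
        rw [hw, List.reverse_cons,
          mrev_append_of_true _ ⟨z, List.mem_reverse.2 hz, hz1'⟩ _]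

lemma mval_gamma_mul (g : FreeGroup Bool) :
    mval (γ * g) = if ∃ n : ℤ, g = γ ^ n then mval g + 1 else mval g := by
  by_cases hp : ∃ n : ℤ, g = γ ^ n
  · obtain ⟨n, rfl⟩ := hp
    rw [if_pos ⟨n, rfl⟩]
    have h1 : γ * γ ^ n = γ ^ (1 + n) := by rw [zpow_add, zpow_one]
    rw [h1, mval_gpow, mval_gpow]
    ring
  · rw [if_neg hp]
    have hp' : ¬ ∀ y ∈ g.toWord, y.1 = false := fun h => hp ((allFalse_iff_pure g).1 h)
    push_neg at hp'
    obtain ⟨z, hz, hz1⟩ := hp'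
    have hz1' : z.1 = true := by simpa using hz1
    cases hL : g.toWord with
    | nil => rw [hL] at hz; simp at hz
    | cons hd tl =>
      by_cases hc : hd = (false, false)
      · have hw : (γ * g).toWord = tl := by
          rw [gamma_eq_mk]
          exact cancel_case false true g tl (by simp [hL, hc])
        have hzt : z ∈ tl := by
          rcases List.mem_cons.1 (hL ▸ hz) with h1 | h2
          · exfalso; rw [h1, hc] at hz1'; simp at hz1'
          · exact h2
        simp only [mval]
        rw [hw, hL, List.reverse_cons,
          mrev_append_of_true _ ⟨z, List.mem_reverse.2 hzt, hz1'⟩ _]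
      · have hhead : g.toWord.head? ≠ some (false, !true) := by
          rw [hL]
          intro hcc
          simp only [List.head?_cons, Option.some_inj] at hcc
          exact hc (by simp [hcc])
        have hw : (γ * g).toWord = (false, true) :: g.toWord := by
          rw [gamma_eq_mk]; exact toWord_letter_mul false true g hhead
        simp only [mval]
        rw [hw, List.reverse_cons,
          mrev_append_of_true _ ⟨z, List.mem_reverse.2 hz, hz1'⟩ _]

lemma mval_b_mul (g : FreeGroup Bool) : mval (α * γ * g) = mval g := by
  rw [mul_assoc, mval_alpha_mul, mval_gamma_mul]
  by_cases hp : ∃ n : ℤ, g = γ ^ n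
  · have hp' : ∃ n : ℤ, γ * g = γ ^ n := by
      obtain ⟨n, rfl⟩ := hp
      exact ⟨1 + n, by rw [zpow_add, zpow_one]⟩
    rw [if_pos hp', if_pos hp]
    ring
  · have hp' : ¬ ∃ n : ℤ, γ * g = γ ^ n := by
      rintro ⟨n, hn⟩
      refine hp ⟨-1 + n, ?_⟩
      rw [zpow_add, ← hn, zpow_neg_one, inv_mul_cancel_left]
    rw [if_neg hp', if_neg hp]

lemma mval_binv_mul (g : FreeGroup Bool) : mval ((α * γ)⁻¹ * g) = mval g := by
  have h := mval_b_mul ((α * γ)⁻¹ * g)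
  rw [mul_inv_cancel_left] at h
  exact h.symm

lemma mval_ainv_mul (g : FreeGroup Bool) :
    mval (α⁻¹ * g) = if ∃ n : ℤ, g = α * γ ^ n then mval g + 1 else mval g := by
  have h := mval_alpha_mul (α⁻¹ * g)
  rw [mul_inv_cancel_left] at h
  by_cases hp : ∃ n : ℤ, g = α * γ ^ n
  · obtain ⟨n, hn⟩ := hp
    have hply : ∃ m : ℤ, α⁻¹ * g = γ ^ m := ⟨n, by rw [hn, inv_mul_cancel_left]⟩
    rw [if_pos ⟨n, hn⟩]
    rw [if_pos hply] at h
    omega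
  · have hply : ¬ ∃ m : ℤ, α⁻¹ * g = γ ^ m := by
      rintro ⟨m, hm⟩
      exact hp ⟨m, by rw [← hm, mul_inv_cancel_left]⟩
    rw [if_neg hp]
    rw [if_neg hply] at h
    omega

/-! ### Transport between the bases `{a, b}` and `{a, c}` of the free group -/

noncomputable def eta' : FreeGroup Bool →* FreeGroup Bool :=
  FreeGroup.lift (fun t => if t then FreeGroup.of true else FreeGroup.of true * FreeGroup.of false)

noncomputable def eta : FreeGroup Bool →* FreeGroup Bool :=
  FreeGroup.lift (fun t => if t then FreeGroup.of true
    else (FreeGroup.of true)⁻¹ * FreeGroup.of false)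

lemma eta_eta' (g : FreeGroup Bool) : eta (eta' g) = g := by
  have hcomp : eta.comp eta' = MonoidHom.id (FreeGroup Bool) := by
    apply FreeGroup.ext_hom
    intro t
    cases t
    · simp [eta, eta', FreeGroup.lift_apply_of, _root_.map_mul, mul_inv_cancel_left]
    · simp [eta, eta', FreeGroup.lift_apply_of]
  calc eta (eta' g) = eta.comp eta' g := rfl
    _ = g := by rw [hcomp]; rfl

/-- The element `c = a⁻¹ b`. -/
noncomputable def cel : FreeGroup Bool := (FreeGroup.of true)⁻¹ * FreeGroup.of false

lemma eta'_a : eta' (FreeGroup.of true) = α := by simp [eta', FreeGroup.lift_apply_of, α]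
lemma eta'_b : eta' (FreeGroup.of false) = α * γ := by simp [eta', FreeGroup.lift_apply_of, α, γ]
lemma eta'_c : eta' cel = γ := by
  rw [cel, _root_.map_mul, _root_.map_inv, eta'_a, eta'_b, inv_mul_cancel_left]
lemma eta_gamma : eta γ = cel := by simp [eta, FreeGroup.lift_apply_of, γ, cel]
lemma eta_alpha : eta α = FreeGroup.of true := by simp [eta, FreeGroup.lift_apply_of, α]

noncomputable def mhat (g : FreeGroup Bool) : ℤ := mval (eta' g)

lemma pure_iff_c (g : FreeGroup Bool) :
    (∃ n : ℤ, eta' g = γ ^ n) ↔ ∃ n : ℤ, g = cel ^ n := by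
  constructor
  · rintro ⟨n, hn⟩
    exact ⟨n, by rw [← eta_eta' g, hn, _root_.map_zpow, eta_gamma]⟩
  · rintro ⟨n, rfl⟩
    exact ⟨n, by rw [_root_.map_zpow, eta'_c]⟩

lemma apure_iff_c (g : FreeGroup Bool) :
    (∃ n : ℤ, eta' g = α * γ ^ n) ↔ ∃ n : ℤ, g = FreeGroup.of true * cel ^ n := by
  constructor
  · rintro ⟨n, hn⟩
    refine ⟨n, ?_⟩
    rw [← eta_eta' g, hn, _root_.map_mul, _root_.map_zpow, eta_gamma, eta_alpha]
  · rintro ⟨n, rfl⟩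
    exact ⟨n, by rw [_root_.map_mul, _root_.map_zpow, eta'_c, eta'_a]⟩

lemma mhat_c_pow (n : ℤ) : mhat (cel ^ n) = n := by
  rw [mhat, _root_.map_zpow, eta'_c, mval_gpow]

lemma mhat_b_mul (g : FreeGroup Bool) : mhat (FreeGroup.of false * g) = mhat g := by
  rw [mhat, _root_.map_mul, eta'_b, mval_b_mul]; rfl

lemma mhat_binv_mul (g : FreeGroup Bool) : mhat ((FreeGroup.of false)⁻¹ * g) = mhat g := by
  rw [mhat, _root_.map_mul, _root_.map_inv, eta'_b, mval_binv_mul]; rfl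

lemma mhat_a_mul (g : FreeGroup Bool) :
    mhat (FreeGroup.of true * g) =
      if ∃ n : ℤ, g = cel ^ n then mhat g - 1 else mhat g := by
  rw [mhat, _root_.map_mul, eta'_a, mval_alpha_mul]
  by_cases hp : ∃ n : ℤ, g = cel ^ n
  · rw [if_pos ((pure_iff_c g).2 hp), if_pos hp]; rfl
  · rw [if_neg (fun hq => hp ((pure_iff_c g).1 hq)), if_neg hp]; rfl

lemma mhat_ainv_mul (g : FreeGroup Bool) :
    mhat ((FreeGroup.of true)⁻¹ * g) =
      if ∃ n : ℤ, g = FreeGroup.of true * cel ^ n then mhat g + 1 else mhat g := by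
  rw [mhat, _root_.map_mul, _root_.map_inv, eta'_a, mval_ainv_mul]
  by_cases hp : ∃ n : ℤ, g = FreeGroup.of true * cel ^ n
  · rw [if_pos ((apure_iff_c g).2 hp), if_pos hp]; rfl
  · rw [if_neg (fun hq => hp ((apure_iff_c g).1 hq)), if_neg hp]; rfl

/-! ### The perturbed action -/

section Action

variable {X : Type*} [MetricSpace X]

lemma act_inv (φ : FreeGroup Bool → X → X) (hφ : ContGroupAction (FreeGroup Bool) X φ)
    (g : FreeGroup Bool) (y : X) : φ g⁻¹ (φ g y) = y := by
  rw [← hφ.2.1, inv_mul_cancel]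
  exact hφ.2.2 y

lemma act_inv' (φ : FreeGroup Bool → X → X) (hφ : ContGroupAction (FreeGroup Bool) X φ)
    (g : FreeGroup Bool) (y : X) : φ g (φ g⁻¹ y) = y := by
  rw [← hφ.2.1, mul_inv_cancel]
  exact hφ.2.2 y

variable (φ : FreeGroup Bool → X → X) (hφ : ContGroupAction (FreeGroup Bool) X φ) (T' : X ≃ X)

/-- The homeomorphism `φ a` as a permutation. -/
def Aeq : Equiv.Perm X :=
  ⟨φ (FreeGroup.of true), φ (FreeGroup.of true)⁻¹,
    fun y => act_inv φ hφ _ y, fun y => act_inv' φ hφ _ y⟩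

/-- The perturbed action: `a ↦ φ a`, `b ↦ φ a ∘ T'`, so that `c = a⁻¹ b ↦ T'`. -/
noncomputable def psih : FreeGroup Bool →* Equiv.Perm X :=
  FreeGroup.lift (fun t => if t then Aeq φ hφ else T'.trans (Aeq φ hφ))

lemma psih_a : psih φ hφ T' (FreeGroup.of true) = Aeq φ hφ := by
  simp [psih, FreeGroup.lift_apply_of]

lemma psih_b : psih φ hφ T' (FreeGroup.of false) = T'.trans (Aeq φ hφ) := by
  simp [psih, FreeGroup.lift_apply_of]

lemma psih_c : psih φ hφ T' cel = T' := by
  rw [cel, _root_.map_mul, _root_.map_inv, psih_a, psih_b]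
  ext y
  show (Aeq φ hφ)⁻¹ ((Aeq φ hφ) (T' y)) = T' y
  simp

lemma psih_cont (hT : Continuous T') (hTs : Continuous T'.symm) (g : FreeGroup Bool) :
    Continuous ⇑(psih φ hφ T' g) := by
  refine FreeGroup.induction_on (C := fun g => Continuous ⇑(psih φ hφ T' g)) g ?_ ?_ ?_ ?_
  · show Continuous ⇑(psih φ hφ T' 1)
    rw [_root_.map_one]
    show Continuous id
    exact continuous_id
  · intro t
    show Continuous ⇑(psih φ hφ T' (FreeGroup.of t))
    cases t
    · rw [psih_b]
      exact (hφ.1 _).comp hT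
    · rw [psih_a]
      exact hφ.1 _
  · intro t _
    show Continuous ⇑(psih φ hφ T' (FreeGroup.of t)⁻¹)
    rw [_root_.map_inv]
    cases t
    · rw [psih_b]
      show Continuous ⇑(T'.trans (Aeq φ hφ)).symm
      exact hTs.comp (hφ.1 _)
    · rw [psih_a]
      show Continuous ⇑(Aeq φ hφ).symm
      exact hφ.1 _
  · intro g₁ g₂ h₁ h₂
    show Continuous ⇑(psih φ hφ T' (g₁ * g₂))
    rw [_root_.map_mul]
    exact h₁.comp h₂

lemma psih_action (hT : Continuous T') (hTs : Continuous T'.symm) :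
    ContGroupAction (FreeGroup Bool) X (fun g => ⇑(psih φ hφ T' g)) := by
  refine ⟨psih_cont φ hφ T' hT hTs, fun g h x => ?_, fun x => ?_⟩
  · show (psih φ hφ T') (g * h) x = (psih φ hφ T') g ((psih φ hφ T') h x)
    rw [_root_.map_mul]; rfl
  · show (psih φ hφ T') 1 x = x
    rw [_root_.map_one]; rfl

end Action

/-- Uniform continuity on a compact metric space, in epsilon-delta form. -/
lemma unif_cont {X : Type*} [MetricSpace X] [CompactSpace X] {h : X → X} (hc : Continuous h)
    {δ₀ : ℝ} (hδ₀ : 0 < δ₀) : ∃ δ > 0, ∀ u v : X, dist u v < δ → dist (h u) (h v) < δ₀ := by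
  have huc := CompactSpace.uniformContinuous_of_continuous hc
  rw [Metric.uniformContinuous_iff] at huc
  obtain ⟨δ, hδ, H⟩ := huc δ₀ hδ₀
  exact ⟨δ, hδ, fun u v hd => H hd⟩

end Stmt3Aux

open Stmt3Aux in
theorem stmt3 {X : Type*} [MetricSpace X] [CompactSpace X]
    (φ : FreeGroup Bool → X → X) (hφ : ContGroupAction (FreeGroup Bool) X φ)
    (S : Set (FreeGroup Bool))
    (hS : S = {FreeGroup.of true, FreeGroup.of false,
      (FreeGroup.of true)⁻¹, (FreeGroup.of false)⁻¹})
    (h : PersistentShadowing S φ) :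
    HomeoPersistentShadowing (φ ((FreeGroup.of true)⁻¹ * FreeGroup.of false)) := by
  classical
  intro ε hε
  obtain ⟨δ₀, hδ₀, Hsh⟩ := h ε hε
  obtain ⟨δ₁, hδ₁, hU1⟩ := unif_cont (hφ.1 (FreeGroup.of true)) hδ₀
  obtain ⟨δ₂, hδ₂, hU2⟩ := unif_cont (hφ.1 cel⁻¹) hδ₀
  refine ⟨min δ₀ (min δ₁ δ₂), lt_min hδ₀ (lt_min hδ₁ hδ₂), ?_⟩
  intro T' hTc hTsc hclose x hx
  have hδδ₀ : min δ₀ (min δ₁ δ₂) ≤ δ₀ := min_le_left _ _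
  have hδδ₁ : min δ₀ (min δ₁ δ₂) ≤ δ₁ := le_trans (min_le_right _ _) (min_le_left _ _)
  have hδδ₂ : min δ₀ (min δ₁ δ₂) ≤ δ₂ := le_trans (min_le_right _ _) (min_le_right _ _)
  have hcel : cel = (FreeGroup.of true)⁻¹ * FreeGroup.of false := rfl
  have hT : ∀ y : X, dist (φ cel y) (T' y) < min δ₀ (min δ₁ δ₂) := by
    intro y; rw [hcel]; exact hclose y
  set ψ : FreeGroup Bool → X → X := fun g => ⇑(psih φ hφ T' g) with hψdef
  have hψact : ContGroupAction (FreeGroup Bool) X ψ := psih_action φ hφ T' hTc hTsc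
  have hmul := hφ.2.1
  -- Closeness of the two actions
  have hCA : CloseActions S φ ψ δ₀ := by
    rw [hS]
    intro s hs y
    simp only [Set.mem_insert_iff, Set.mem_singleton_iff] at hs
    rcases hs with rfl | rfl | rfl | rfl
    · have hy : ψ (FreeGroup.of true) y = φ (FreeGroup.of true) y := by
        show (psih φ hφ T') (FreeGroup.of true) y = _
        rw [psih_a]; rfl
      rw [hy, dist_self]; exact hδ₀
    · have h1 : ψ (FreeGroup.of false) y = φ (FreeGroup.of true) (T' y) := by
        show (psih φ hφ T') (FreeGroup.of false) y = _
        rw [psih_b]; rfl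
      have h2 : φ (FreeGroup.of false) y = φ (FreeGroup.of true) (φ cel y) := by
        rw [← hmul, hcel, mul_inv_cancel_left]
      rw [h1, h2]
      exact hU1 _ _ (lt_of_lt_of_le (hT y) hδδ₁)
    · have hy : ψ (FreeGroup.of true)⁻¹ y = φ (FreeGroup.of true)⁻¹ y := by
        show (psih φ hφ T') (FreeGroup.of true)⁻¹ y = _
        rw [_root_.map_inv, psih_a]; rfl
      rw [hy, dist_self]; exact hδ₀
    · have h1 : ψ (FreeGroup.of false)⁻¹ y = T'.symm (φ (FreeGroup.of true)⁻¹ y) := by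
        show (psih φ hφ T') (FreeGroup.of false)⁻¹ y = _
        rw [_root_.map_inv, psih_b]; rfl
      have hb' : (FreeGroup.of false)⁻¹ = cel⁻¹ * (FreeGroup.of true)⁻¹ := by
        rw [hcel]; group
      have h2 : φ (FreeGroup.of false)⁻¹ y = φ cel⁻¹ (φ (FreeGroup.of true)⁻¹ y) := by
        rw [hb', hmul]
      rw [h1, h2]
      set z := T'.symm (φ (FreeGroup.of true)⁻¹ y) with hzdef
      have hy2 : φ (FreeGroup.of true)⁻¹ y = T' z := by
        rw [hzdef, Equiv.apply_symm_apply]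
      rw [hy2]
      have hgoal : dist (φ cel⁻¹ (T' z)) (φ cel⁻¹ (φ cel z)) < δ₀ := by
        refine hU2 _ _ ?_
        have hz3 := hT z
        rw [dist_comm] at hz3
        exact lt_of_lt_of_le hz3 hδδ₂
      rwa [act_inv φ hφ cel z] at hgoal
  -- The pseudo-orbit over the free group
  set f : FreeGroup Bool → X :=
    fun g => (psih φ hφ T') (g * cel ^ (-(mhat g))) (x (mhat g)) with hfdef
  have hfval : ∀ g : FreeGroup Bool,
      f g = (psih φ hφ T') (g * cel ^ (-(mhat g))) (x (mhat g)) := fun g => rfl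
  have hfc : ∀ n : ℤ, f (cel ^ n) = x n := by
    intro n
    rw [hfval, mhat_c_pow, ← zpow_add, show n + -n = (0:ℤ) from by ring, zpow_zero,
      _root_.map_one]
    rfl
  have hstep : ∀ s g : FreeGroup Bool, mhat (s * g) = mhat g → f (s * g) = ψ s (f g) := by
    intro s g hm
    show (psih φ hφ T') ((s * g) * cel ^ (-(mhat (s * g)))) (x (mhat (s * g)))
      = (psih φ hφ T') s ((psih φ hφ T') (g * cel ^ (-(mhat g))) (x (mhat g)))
    rw [hm, mul_assoc, _root_.map_mul]
    rfl
  have hPO : IsPseudoOrbit S ψ δ₀ f := by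
    rw [hS]
    intro s hs g
    simp only [Set.mem_insert_iff, Set.mem_singleton_iff] at hs
    rcases hs with rfl | rfl | rfl | rfl
    · -- s = a
      by_cases hp : ∃ n : ℤ, g = cel ^ n
      · obtain ⟨n, rfl⟩ := hp
        have hm1 : mhat (FreeGroup.of true * cel ^ n) = n - 1 := by
          rw [mhat_a_mul, if_pos ⟨n, rfl⟩, mhat_c_pow]
        have he : (FreeGroup.of true * cel ^ n) * cel ^ (-(n - 1))
            = FreeGroup.of true * cel := by
          rw [mul_assoc, ← zpow_add, show n + -(n-1) = (1:ℤ) from by ring, zpow_one]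
        have h3 : f (FreeGroup.of true * cel ^ n)
            = φ (FreeGroup.of true) (T' (x (n - 1))) := by
          rw [hfval, hm1, he, _root_.map_mul, psih_a, psih_c]
          rfl
        have h2 : ψ (FreeGroup.of true) (f (cel ^ n)) = φ (FreeGroup.of true) (x n) := by
          rw [hfc n]
          show (psih φ hφ T') (FreeGroup.of true) (x n) = _
          rw [psih_a]; rfl
        rw [h3, h2]
        refine hU1 _ _ ?_
        have hx' := hx (n - 1)
        rw [show n - 1 + 1 = n from by ring] at hx'
        exact lt_of_lt_of_le hx' hδδ₁
      · have hm : mhat (FreeGroup.of true * g) = mhat g := by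
          rw [mhat_a_mul, if_neg hp]
        rw [hstep _ _ hm, dist_self]; exact hδ₀
    · rw [hstep _ _ (mhat_b_mul g), dist_self]; exact hδ₀
    · -- s = a⁻¹
      by_cases hp : ∃ n : ℤ, g = FreeGroup.of true * cel ^ n
      · obtain ⟨n, rfl⟩ := hp
        have hg1 : (FreeGroup.of true)⁻¹ * (FreeGroup.of true * cel ^ n) = cel ^ n :=
          inv_mul_cancel_left _ _
        have hm1 : mhat (FreeGroup.of true * cel ^ n) = n - 1 := by
          rw [mhat_a_mul, if_pos ⟨n, rfl⟩, mhat_c_pow]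
        have he : (FreeGroup.of true * cel ^ n) * cel ^ (-(n - 1))
            = FreeGroup.of true * cel := by
          rw [mul_assoc, ← zpow_add, show n + -(n-1) = (1:ℤ) from by ring, zpow_one]
        have h4 : ψ (FreeGroup.of true)⁻¹ (f (FreeGroup.of true * cel ^ n))
            = T' (x (n - 1)) := by
          rw [hfval, hm1, he]
          calc (psih φ hφ T') (FreeGroup.of true)⁻¹
                ((psih φ hφ T') (FreeGroup.of true * cel) (x (n - 1)))
              = ((psih φ hφ T') (FreeGroup.of true)⁻¹
                  * (psih φ hφ T') (FreeGroup.of true * cel)) (x (n - 1)) := rfl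
            _ = (psih φ hφ T') ((FreeGroup.of true)⁻¹ * (FreeGroup.of true * cel))
                  (x (n - 1)) := by
                rw [_root_.map_mul (psih φ hφ T') ((FreeGroup.of true)⁻¹)
                  (FreeGroup.of true * cel)]
            _ = T' (x (n - 1)) := by rw [inv_mul_cancel_left, psih_c]
        rw [hg1, hfc n, h4]
        have hx' := hx (n - 1)
        rw [show n - 1 + 1 = n from by ring] at hx'
        rw [dist_comm]
        exact lt_of_lt_of_le hx' hδδ₀
      · have hm : mhat ((FreeGroup.of true)⁻¹ * g) = mhat g := by
          rw [mhat_ainv_mul, if_neg hp]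
        rw [hstep _ _ hm, dist_self]; exact hδ₀
    · rw [hstep _ _ (mhat_binv_mul g), dist_self]; exact hδ₀
  obtain ⟨p, hp⟩ := Hsh ψ hψact hCA f hPO
  refine ⟨p, fun n => ?_⟩
  have h5 := hp (cel ^ n)
  rw [hfc n] at h5
  have h6 : ψ (cel ^ n) p = (T' ^ n) p := by
    show (psih φ hφ T') (cel ^ n) p = _
    rw [_root_.map_zpow, psih_c]
  rw [h6] at h5
  rw [dist_comm]
  exact h5
end

section
/- Let F₂ = ⟨a,b⟩ be the free group on two generators acting continuously on a compact metric space X via φ. If φ has the shadowing property, then the homeomorphism φ_{a⁻¹b}: X → X has the shadowing property as a single homeomorphism. -/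
open MeasureTheory

namespace Stmt4Aux
open FreeGroup

def Rl (x y : Bool × Bool) : Prop := ¬(x.1 = y.1 ∧ x.2 = !y.2)

instance : DecidableRel Rl := fun x y => by unfold Rl; infer_instance

lemma Rl_symm : ∀ x y, Rl x y → Rl y x := by decide

def wmk (r : List (Bool × Bool)) : FreeGroup Bool := FreeGroup.mk r.reverse

def RedW (r : List (Bool × Bool)) : Prop := List.Chain' Rl r

def TW (r : List (Bool × Bool)) : Prop :=
  (∀ t, r ≠ (true, true) :: t) ∧ (∀ t, r ≠ (false, true) :: (true, false) :: t)

lemma mk_ff (g : Bool) : FreeGroup.mk [(g, false)] = (FreeGroup.of g)⁻¹ := by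
  have : (FreeGroup.mk [(g, true)])⁻¹ = FreeGroup.mk [(g, false)] := by
    rw [FreeGroup.inv_mk]; simp [FreeGroup.invRev]
  rw [← this]; rfl

lemma mk_tt (g : Bool) : FreeGroup.mk [(g, true)] = FreeGroup.of g := rfl

lemma wmk_nil : wmk [] = 1 := rfl

lemma wmk_cons (x : Bool × Bool) (r : List (Bool × Bool)) :
    wmk (x :: r) = wmk r * FreeGroup.mk [x] := by
  simp [wmk, ← FreeGroup.mul_mk]

def A : FreeGroup Bool := .of true
def B : FreeGroup Bool := .of false
def C : FreeGroup Bool := A⁻¹ * B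

lemma wmk_cons_tt (g : Bool) (r) : wmk ((g, true) :: r) = wmk r * FreeGroup.of g := by
  rw [wmk_cons, mk_tt]

lemma wmk_cons_ff (g : Bool) (r) : wmk ((g, false) :: r) = wmk r * (FreeGroup.of g)⁻¹ := by
  rw [wmk_cons, mk_ff]

lemma wmk_c (r) : wmk ((false, true) :: (true, false) :: r) = wmk r * C := by
  rw [wmk_cons_tt, wmk_cons_ff, C, mul_assoc]; rfl

lemma wmk_cinv (r) : wmk ((true, true) :: (false, false) :: r) = wmk r * C⁻¹ := by
  rw [wmk_cons_tt, wmk_cons_ff, C, mul_inv_rev, inv_inv, mul_assoc]; rfl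

lemma wmk_a (r) : wmk ((true, true) :: r) = wmk ((false, true) :: r) * C⁻¹ := by
  rw [wmk_cons_tt, wmk_cons_tt]
  simp [C, A, B, mul_assoc]

def hd1 : List (Bool × Bool) → ℕ
  | (true, true) :: _ => 1
  | _ => 0

lemma hd1_le (r : List (Bool × Bool)) : hd1 r ≤ 1 := by
  unfold hd1; split <;> omega

def stripF : List (Bool × Bool) → List (Bool × Bool) × ℤ
  | (true, true) :: (false, false) :: r => ((stripF r).1, (stripF r).2 - 1)
  | (true, true) :: r => ((stripF ((false, true) :: r)).1, (stripF ((false, true) :: r)).2 - 1)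
  | (false, true) :: (true, false) :: r => ((stripF r).1, (stripF r).2 + 1)
  | r => (r, 0)
termination_by r => 2 * r.length + hd1 r
decreasing_by
  · have := hd1_le r; simp [hd1] at *; omega
  · simp [hd1]
  · have := hd1_le r; simp [hd1] at *; omega

lemma stripF_spec : ∀ r, wmk (stripF r).1 * C ^ (stripF r).2 = wmk r := by
  intro r
  induction r using stripF.induct with
  | case1 r ih =>
    rw [stripF.eq_1, wmk_cinv, ← ih, zpow_sub_one, mul_assoc]
  | case2 r hne ih =>
    rw [stripF.eq_2 r (fun t ht => hne t ht), wmk_a, ← ih, zpow_sub_one, mul_assoc]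
  | case3 r ih =>
    rw [stripF.eq_3, wmk_c, ← ih, zpow_add_one, mul_assoc]
  | case4 r h1 h2 h3 =>
    rw [stripF.eq_4 r (fun t ht => h1 t ht) (fun t ht => h2 t ht) (fun t ht => h3 t ht)]
    simp

lemma stripF_red : ∀ r, RedW r → RedW (stripF r).1 ∧ TW (stripF r).1 := by
  intro r
  induction r using stripF.induct with
  | case1 r ih => intro hR; rw [stripF.eq_1]; exact ih (hR.tail.tail)
  | case2 r hne ih =>
    intro hR
    rw [stripF.eq_2 r (fun t ht => hne t ht)]
    apply ih
    refine List.isChain_cons.mpr ⟨?_, hR.tail⟩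
    intro y hy
    rcases r with _ | ⟨z, r'⟩
    · simp at hy
    · have hyz : z = y := by simpa using hy
      rw [← hyz]
      rcases z with ⟨zc, zd⟩
      rintro ⟨h1, h2⟩
      simp at h1 h2
      subst h1; subst h2
      exact hne r' rfl
  | case3 r ih => intro hR; rw [stripF.eq_3]; exact ih (hR.tail.tail)
  | case4 r h1 h2 h3 =>
    intro hR
    rw [stripF.eq_4 r (fun t ht => h1 t ht) (fun t ht => h2 t ht) (fun t ht => h3 t ht)]
    exact ⟨hR, fun t ht => h2 t ht, fun t ht => h3 t ht⟩

lemma reduce_of_chain : ∀ l : List (Bool × Bool), List.Chain' Rl l → FreeGroup.reduce l = l := by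
  intro l
  induction l with
  | nil => intro; rfl
  | cons x l ih =>
    intro hc
    rw [FreeGroup.reduce.cons, ih hc.tail]
    rcases l with _ | ⟨y, tl⟩
    · rfl
    · have := (List.isChain_cons_cons.mp hc).1
      unfold Rl at this
      simp only [if_neg this]

lemma chain_of_reduce : ∀ l : List (Bool × Bool), FreeGroup.reduce l = l → List.Chain' Rl l := by
  intro l
  induction l with
  | nil => intro; exact List.isChain_nil
  | cons x l ih =>
    intro h
    have hlen : (FreeGroup.reduce l).length ≤ l.length :=
      (FreeGroup.reduce.red (L := l)).length_le
    rw [FreeGroup.reduce.cons] at h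
    rcases hM : FreeGroup.reduce l with _ | ⟨y, tl⟩
    · rw [hM] at h; dsimp at h
      have : l = [] := by simpa using h
      subst this; exact List.isChain_singleton x
    · rw [hM] at h hlen; dsimp at h
      by_cases hbad : x.1 = y.1 ∧ x.2 = !y.2
      · rw [if_pos hbad] at h
        exfalso
        have hlc := congrArg List.length h
        simp at hlc hlen
        omega
      · rw [if_neg hbad] at h
        have hl : l = y :: tl := by
          have := (List.cons.injEq x (y :: tl) x l).mp h
          exact this.2.symm
        have hcl : List.Chain' Rl l := ih (hM.trans hl.symm)
        rw [hl] at hcl ⊢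
        exact List.isChain_cons_cons.mpr ⟨hbad, hcl⟩

end Stmt4Aux
namespace Stmt4Aux
open FreeGroup

lemma RedW_rev {r : List (Bool × Bool)} (h : RedW r) : List.Chain' Rl r.reverse := by
  refine List.isChain_reverse.mpr ?_
  exact h.imp (fun a b hab => Rl_symm a b hab)

lemma RedW_of_rev {r : List (Bool × Bool)} (h : List.Chain' Rl r.reverse) : RedW r := by
  have := (List.isChain_reverse).mp h
  exact this.imp (fun a b hab => Rl_symm b a hab)

lemma wmk_inj {r₁ r₂ : List (Bool × Bool)} (h₁ : RedW r₁) (h₂ : RedW r₂)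
    (h : wmk r₁ = wmk r₂) : r₁ = r₂ := by
  have e : FreeGroup.reduce r₁.reverse = FreeGroup.reduce r₂.reverse := by
    have := congrArg FreeGroup.toWord h
    simpa [wmk, FreeGroup.toWord_mk] using this
  rw [reduce_of_chain _ (RedW_rev h₁), reduce_of_chain _ (RedW_rev h₂)] at e
  exact List.reverse_injective e

lemma toWord_rev_red (g : FreeGroup Bool) : RedW (FreeGroup.toWord g).reverse := by
  apply RedW_of_rev
  rw [List.reverse_reverse]
  exact chain_of_reduce _ (FreeGroup.reduce_toWord g)

lemma wmk_toWord_rev (g : FreeGroup Bool) : wmk (FreeGroup.toWord g).reverse = g := by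
  simp [wmk, FreeGroup.mk_toWord]

lemma head_ne {z : Bool × Bool} {r' : List (Bool × Bool)} {w : Bool × Bool}
    (h : ∀ t, (z :: r' : List (Bool × Bool)) ≠ w :: t) : z ≠ w := by
  intro hz; exact h r' (by rw [hz])

lemma powA (k : ℕ) : ∀ r, RedW r → TW r → ∃ r', RedW ((false,true)::(true,false)::r') ∧
    wmk ((false,true)::(true,false)::r') = wmk r * C ^ ((k : ℤ) + 1) := by
  induction k with
  | zero =>
    intro r hR hT
    refine ⟨r, ?_, by rw [wmk_c]; norm_num⟩
    refine List.isChain_cons_cons.mpr ⟨by decide, List.isChain_cons.mpr ⟨?_, hR⟩⟩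
    intro y hy
    rcases r with _ | ⟨z, r'⟩
    · simp at hy
    · have hz : z = y := by simpa using hy
      rw [← hz]
      rcases z with ⟨zc, zd⟩
      rintro ⟨e1, e2⟩
      simp at e1 e2; subst e1; subst e2
      exact hT.1 r' rfl
  | succ k ih =>
    intro r hR hT
    obtain ⟨r', hR', hw⟩ := ih r hR hT
    refine ⟨(false,true)::(true,false)::r',
      List.isChain_cons_cons.mpr ⟨by decide, List.isChain_cons_cons.mpr ⟨by decide, hR'⟩⟩, ?_⟩
    rw [wmk_c, hw, mul_assoc, ← zpow_add_one]
    congr 1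

lemma powB (k : ℕ) : ∀ r, RedW r → TW r → ∃ r', RedW ((true,true)::r') ∧
    wmk ((true,true)::r') = wmk r * C ^ (-((k : ℤ) + 1)) := by
  induction k with
  | zero =>
    intro r hR hT
    by_cases hr : ∃ r₃, r = (false,true)::r₃
    · obtain ⟨r₃, rfl⟩ := hr
      refine ⟨r₃, ?_, ?_⟩
      · refine List.isChain_cons.mpr ⟨?_, hR.tail⟩
        intro y hy
        rcases r₃ with _ | ⟨z, r₄⟩
        · simp at hy
        · have hz : z = y := by simpa using hy
          rw [← hz]; rcases z with ⟨zc, zd⟩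
          rintro ⟨e1, e2⟩
          simp at e1 e2; subst e1; subst e2
          exact hT.2 r₄ rfl
      · rw [wmk_a]; norm_num
    · refine ⟨(false,false)::r, ?_, ?_⟩
      · refine List.isChain_cons_cons.mpr ⟨by decide, List.isChain_cons.mpr ⟨?_, hR⟩⟩
        intro y hy
        rcases r with _ | ⟨z, r₄⟩
        · simp at hy
        · have hz : z = y := by simpa using hy
          rw [← hz]; rcases z with ⟨zc, zd⟩
          rintro ⟨e1, e2⟩
          simp at e1 e2; subst e1; subst e2
          exact hr ⟨r₄, rfl⟩
      · rw [wmk_cinv]; norm_num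
  | succ k ih =>
    intro r hR hT
    obtain ⟨r', hR', hw⟩ := ih r hR hT
    refine ⟨(false,false)::(true,true)::r',
      List.isChain_cons_cons.mpr ⟨by decide, List.isChain_cons_cons.mpr ⟨by decide, hR'⟩⟩, ?_⟩
    rw [wmk_cinv, hw, mul_assoc, ← zpow_sub_one]
    congr 1

lemma uniq {r₁ r₂ : List (Bool × Bool)} {n₁ n₂ : ℤ} (hR₁ : RedW r₁) (hT₁ : TW r₁)
    (hR₂ : RedW r₂) (hT₂ : TW r₂)
    (h : wmk r₁ * C ^ n₁ = wmk r₂ * C ^ n₂) : r₁ = r₂ ∧ n₁ = n₂ := by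
  have key : wmk r₁ * C ^ (n₁ - n₂) = wmk r₂ := by
    rw [zpow_sub, ← mul_assoc, h, mul_assoc, mul_inv_cancel, mul_one]
  rcases lt_trichotomy (n₁ - n₂) 0 with hlt | heq | hgt
  · exfalso
    obtain ⟨r', hR', hw⟩ := powB ((-(n₁ - n₂)).toNat - 1) r₁ hR₁ hT₁
    have hcast : -((((-(n₁ - n₂)).toNat - 1 : ℕ) : ℤ) + 1) = n₁ - n₂ := by omega
    rw [hcast, key] at hw
    have := wmk_inj hR' hR₂ hw
    exact hT₂.1 r' this.symm
  · rw [heq, zpow_zero, mul_one] at key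
    exact ⟨wmk_inj hR₁ hR₂ key, by omega⟩
  · exfalso
    obtain ⟨r', hR', hw⟩ := powA ((n₁ - n₂).toNat - 1) r₁ hR₁ hT₁
    have hcast : ((((n₁ - n₂).toNat - 1 : ℕ) : ℤ) + 1) = n₁ - n₂ := by omega
    rw [hcast, key] at hw
    have := wmk_inj hR' hR₂ hw
    exact hT₂.2 r' this.symm

lemma canon {r : List (Bool × Bool)} (hR : RedW r) (hT : TW r) (n : ℤ) :
    stripF (FreeGroup.toWord (wmk r * C ^ n)).reverse = (r, n) := by
  set g := wmk r * C ^ n with hg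
  set q := (FreeGroup.toWord g).reverse with hq
  have hRq : RedW q := toWord_rev_red g
  have hwq : wmk q = g := wmk_toWord_rev g
  have hred := stripF_red q hRq
  have heq := uniq hred.1 hred.2 hR hT (by rw [stripF_spec q, hwq, hg])
  rw [Prod.ext_iff]
  exact ⟨heq.1, heq.2⟩

lemma TW_concat {r₀ : List (Bool × Bool)} {y : Bool × Bool} (h : TW (r₀ ++ [y])) : TW r₀ := by
  constructor
  · intro t ht; exact h.1 (t ++ [y]) (by rw [ht]; simp)
  · intro t ht; exact h.2 (t ++ [y]) (by rw [ht]; simp)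

lemma TW_append {u : List (Bool × Bool)} (hT : TW u) (w : Bool × Bool) (hne : u ≠ [])
    (hexc : ¬(u = [(false,true)] ∧ w = (true,false))) : TW (u ++ [w]) := by
  rcases u with _ | ⟨z, u₁⟩
  · exact absurd rfl hne
  constructor
  · rintro t ht
    simp only [List.cons_append] at ht
    injection ht with h1 _
    exact hT.1 u₁ (by rw [h1])
  · rintro t ht
    simp only [List.cons_append] at ht
    injection ht with h1 h2
    rcases u₁ with _ | ⟨z', u₂⟩
    · simp only [List.nil_append] at h2
      injection h2 with hw _
      exact hexc ⟨by rw [h1], hw⟩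
    · simp only [List.cons_append] at h2
      injection h2 with h3 _
      exact hT.2 u₂ (by rw [h1, h3])

end Stmt4Aux
namespace Stmt4Aux
open FreeGroup

lemma clos (w : Bool × Bool) (r : List (Bool × Bool)) (hR : RedW r) (hT : TW r) :
    (∃ r', RedW r' ∧ TW r' ∧ wmk r' = FreeGroup.mk [w] * wmk r) ∨
    (w = (true, false) ∧ r = [(false, true)]) ∨
    (w = (true, true) ∧ r = []) := by
  rcases List.eq_nil_or_concat' r with rfl | ⟨r₀, y, rfl⟩
  · by_cases hw : w = (true, true)
    · right; right; exact ⟨hw, rfl⟩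
    · left
      refine ⟨[w], List.isChain_singleton w, ⟨?_, ?_⟩, ?_⟩
      · intro t ht
        injection ht with h1 _
        exact hw h1
      · intro t ht; simp at ht
      · simp [wmk, ← FreeGroup.one_eq_mk]
  · by_cases hy : y = (w.1, !w.2)
    · left
      refine ⟨r₀, hR.left_of_append, TW_concat hT, ?_⟩
      have hww : FreeGroup.mk [w] * FreeGroup.mk [y] = 1 := by
        subst hy
        rcases w with ⟨g, s⟩
        cases s <;> simp [mk_tt, mk_ff]
      have hsplit : wmk (r₀ ++ [y]) = FreeGroup.mk [y] * wmk r₀ := by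
        simp [wmk, FreeGroup.mul_mk]
      rw [hsplit, ← mul_assoc, hww, one_mul]
    · by_cases hexc : w = (true, false) ∧ r₀ ++ [y] = [(false, true)]
      · right; left; exact ⟨hexc.1, hexc.2⟩
      · left
        refine ⟨(r₀ ++ [y]) ++ [w], ?_, ?_, ?_⟩
        · apply List.isChain_append.mpr
          refine ⟨hR, List.isChain_singleton w, ?_⟩
          intro x hx z hz
          have hxy : y = x := by
            rw [List.getLast?_concat] at hx
            simpa using hx
          have hzw : w = z := by simpa using hz
          have hxy : x = y := hxy.symm
          have hzw : z = w := hzw.symm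
          rw [hxy, hzw]
          rcases y with ⟨g1, s1⟩
          rcases w with ⟨g2, s2⟩
          rintro ⟨e1, e2⟩
          simp only at e1 e2
          exact hy (by rw [e1, e2])
        · apply TW_append hT w (by simp)
          intro hh
          exact hexc ⟨hh.2, hh.1⟩
        · simp [wmk, FreeGroup.mul_mk]

lemma wmk_b : wmk [(false, true)] = B := by
  rw [wmk_cons_tt, wmk_nil, one_mul]; rfl

lemma TW_nil : TW ([] : List (Bool × Bool)) := ⟨fun t ht => by simp at ht, fun t ht => by simp at ht⟩

lemma TW_b : TW [(false, true)] :=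
  ⟨fun t ht => by simp at ht, fun t ht => by simp at ht⟩

lemma trans (w : Bool × Bool) (g : FreeGroup Bool) :
    (∃ r', wmk r' = FreeGroup.mk [w] * wmk (stripF (FreeGroup.toWord g).reverse).1 ∧
      stripF (FreeGroup.toWord (FreeGroup.mk [w] * g)).reverse =
        (r', (stripF (FreeGroup.toWord g).reverse).2)) ∨
    (w = (true, false) ∧ (stripF (FreeGroup.toWord g).reverse).1 = [(false, true)] ∧
      stripF (FreeGroup.toWord (FreeGroup.mk [w] * g)).reverse =
        ([], (stripF (FreeGroup.toWord g).reverse).2 + 1)) ∨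
    (w = (true, true) ∧ (stripF (FreeGroup.toWord g).reverse).1 = [] ∧
      stripF (FreeGroup.toWord (FreeGroup.mk [w] * g)).reverse =
        ([(false, true)], (stripF (FreeGroup.toWord g).reverse).2 - 1)) := by
  set q := (FreeGroup.toWord g).reverse with hq
  have hRq : RedW q := toWord_rev_red g
  have hg : wmk (stripF q).1 * C ^ (stripF q).2 = g := by
    rw [stripF_spec q, wmk_toWord_rev g]
  obtain ⟨hR1, hT1⟩ := stripF_red q hRq
  rcases clos w (stripF q).1 hR1 hT1 with ⟨r', hR', hT', hw'⟩ | ⟨hw, hr⟩ | ⟨hw, hr⟩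
  · left
    refine ⟨r', hw', ?_⟩
    have hdec : FreeGroup.mk [w] * g = wmk r' * C ^ (stripF q).2 := by
      rw [hw', ← hg, mul_assoc]
    rw [hdec]
    exact canon hR' hT' _
  · right; left
    refine ⟨hw, hr, ?_⟩
    have hAB : FreeGroup.mk [((true : Bool), false)] * B = C := by
      rw [mk_ff]; rfl
    have hdec : FreeGroup.mk [w] * g = wmk [] * C ^ ((stripF q).2 + 1) := by
      rw [← hg, hr, hw, wmk_nil, one_mul, wmk_b, ← mul_assoc, hAB,
        add_comm, zpow_one_add]
    rw [hdec]
    exact canon List.isChain_nil TW_nil _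
  · right; right
    refine ⟨hw, hr, ?_⟩
    have hBA : B * C⁻¹ = FreeGroup.of true := by
      have : C⁻¹ = B⁻¹ * FreeGroup.of true := by
        rw [C, mul_inv_rev, inv_inv]; rfl
      rw [this, ← mul_assoc, mul_inv_cancel, one_mul]
    have hdec : FreeGroup.mk [w] * g = wmk [(false, true)] * C ^ ((stripF q).2 - 1) := by
      rw [← hg, hr, hw, wmk_nil, one_mul, mk_tt, wmk_b, zpow_sub_one, ← zpow_neg_one,
        zpow_mul_comm, zpow_neg_one, ← mul_assoc, hBA]
    rw [hdec]
    exact canon (List.isChain_singleton _) TW_b _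

end Stmt4Aux
namespace Stmt4Aux
open FreeGroup

lemma BCinv : B * C⁻¹ = FreeGroup.of true := by
  have : C⁻¹ = B⁻¹ * FreeGroup.of true := by
    rw [C, mul_inv_rev, inv_inv]; rfl
  rw [this, ← mul_assoc, mul_inv_cancel, one_mul]

end Stmt4Aux


theorem stmt4 {X : Type*} [MetricSpace X] [CompactSpace X]
    (φ : FreeGroup Bool → X → X) (hφ : ContGroupAction (FreeGroup Bool) X φ)
    (S : Set (FreeGroup Bool))
    (hS : S = {FreeGroup.of true, FreeGroup.of false,
      (FreeGroup.of true)⁻¹, (FreeGroup.of false)⁻¹})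
    (h : Shadowing S φ)
    (c : FreeGroup Bool) (hc : c = (FreeGroup.of true)⁻¹ * FreeGroup.of false) :
    ∀ ε > (0:ℝ), ∃ δ > (0:ℝ), ∀ x : ℤ → X,
      (∀ n : ℤ, dist (φ c (x n)) (x (n + 1)) < δ) →
      ∃ y : X, ∀ n : ℤ, dist (φ (c ^ n) y) (x n) < ε := by
  intro ε hε
  obtain ⟨δ, hδpos, hδ⟩ := h ε hε
  have hucB : UniformContinuous (φ Stmt4Aux.B) :=
    CompactSpace.uniformContinuous_of_continuous (hφ.1 _)
  obtain ⟨δ₁, hδ₁pos, hB⟩ := Metric.uniformContinuous_iff.mp hucB δ hδpos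
  have hucC : UniformContinuous (φ (Stmt4Aux.C)⁻¹) :=
    CompactSpace.uniformContinuous_of_continuous (hφ.1 _)
  obtain ⟨δ₂, hδ₂pos, hC⟩ := Metric.uniformContinuous_iff.mp hucC δ₁ hδ₁pos
  refine ⟨min δ δ₂, by positivity, ?_⟩
  intro x hx
  have hcC : c = Stmt4Aux.C := by rw [hc]; rfl
  rw [hcC] at hx
  set f : FreeGroup Bool → X := fun g =>
    φ (Stmt4Aux.wmk (Stmt4Aux.stripF (FreeGroup.toWord g).reverse).1)
      (x ((Stmt4Aux.stripF (FreeGroup.toWord g).reverse).2)) with hf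
  have main : ∀ (w : Bool × Bool) (g : FreeGroup Bool) r',
      Stmt4Aux.wmk r' = FreeGroup.mk [w] * Stmt4Aux.wmk (Stmt4Aux.stripF (FreeGroup.toWord g).reverse).1 →
      Stmt4Aux.stripF (FreeGroup.toWord (FreeGroup.mk [w] * g)).reverse =
        (r', (Stmt4Aux.stripF (FreeGroup.toWord g).reverse).2) →
      dist (f (FreeGroup.mk [w] * g)) (φ (FreeGroup.mk [w]) (f g)) < δ := by
    intro w g r' hwr hstrip
    simp only [hf, hstrip]
    rw [hwr, hφ.2.1]
    simpa using hδpos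
  have hPO : IsPseudoOrbit S φ δ f := by
    intro s hs g
    rw [hS] at hs
    simp only [Set.mem_insert_iff, Set.mem_singleton_iff] at hs
    rcases hs with rfl | rfl | rfl | rfl
    · -- s = of true
      have hsw : FreeGroup.of true = FreeGroup.mk [((true : Bool), true)] := rfl
      rw [hsw]
      rcases Stmt4Aux.trans (true, true) g with ⟨r', hwr, hstrip⟩ | ⟨hw, _⟩ | ⟨_, hr, hstrip⟩
      · exact main _ g r' hwr hstrip
      · simp at hw
      · -- exceptional : t = 1
        simp only [hf, hstrip, hr]
        rw [Stmt4Aux.wmk_b, Stmt4Aux.wmk_nil]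
        have h1 : φ (FreeGroup.mk [((true : Bool), true)]) (φ 1 (x ((Stmt4Aux.stripF (FreeGroup.toWord g).reverse).2)))
            = φ Stmt4Aux.B (φ Stmt4Aux.C⁻¹ (x ((Stmt4Aux.stripF (FreeGroup.toWord g).reverse).2))) := by
          rw [hφ.2.2, ← hφ.2.1, Stmt4Aux.BCinv]; rfl
        rw [h1]
        apply hB
        set n := (Stmt4Aux.stripF (FreeGroup.toWord g).reverse).2 with hn
        have h2 := hx (n - 1)
        rw [sub_add_cancel] at h2
        have h3 : φ Stmt4Aux.C⁻¹ (φ Stmt4Aux.C (x (n - 1))) = x (n - 1) := by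
          rw [← hφ.2.1, inv_mul_cancel, hφ.2.2]
        have h4 := hC (a := φ Stmt4Aux.C (x (n - 1))) (b := x n)
          (lt_of_lt_of_le h2 (min_le_right _ _))
        rw [h3] at h4
        exact h4
    · -- s = of false
      have hsw : FreeGroup.of false = FreeGroup.mk [((false : Bool), true)] := rfl
      rw [hsw]
      rcases Stmt4Aux.trans (false, true) g with ⟨r', hwr, hstrip⟩ | ⟨hw, _⟩ | ⟨hw, _⟩
      · exact main _ g r' hwr hstrip
      · simp at hw
      · simp at hw
    · -- s = (of true)⁻¹
      have hsw : (FreeGroup.of true)⁻¹ = FreeGroup.mk [((true : Bool), false)] :=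
        (Stmt4Aux.mk_ff true).symm
      rw [hsw]
      rcases Stmt4Aux.trans (true, false) g with ⟨r', hwr, hstrip⟩ | ⟨_, hr, hstrip⟩ | ⟨hw, _⟩
      · exact main _ g r' hwr hstrip
      · -- exceptional : t = b
        simp only [hf, hstrip, hr]
        rw [Stmt4Aux.wmk_b, Stmt4Aux.wmk_nil]
        set n := (Stmt4Aux.stripF (FreeGroup.toWord g).reverse).2 with hn
        have h1 : φ (FreeGroup.mk [((true : Bool), false)]) (φ Stmt4Aux.B (x n))
            = φ Stmt4Aux.C (x n) := by
          rw [← hφ.2.1]; rfl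
        rw [h1, hφ.2.2]
        have h2 := hx n
        rw [dist_comm]
        exact lt_of_lt_of_le h2 (min_le_left _ _)
      · simp at hw
    · -- s = (of false)⁻¹
      have hsw : (FreeGroup.of false)⁻¹ = FreeGroup.mk [((false : Bool), false)] :=
        (Stmt4Aux.mk_ff false).symm
      rw [hsw]
      rcases Stmt4Aux.trans (false, false) g with ⟨r', hwr, hstrip⟩ | ⟨hw, _⟩ | ⟨hw, _⟩
      · exact main _ g r' hwr hstrip
      · simp at hw
      · simp at hw
  obtain ⟨p, hp⟩ := hδ f hPO
  refine ⟨p, fun n => ?_⟩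
  have hfn : f (c ^ n) = x n := by
    simp only [hf, hcC]
    have hCn : Stmt4Aux.C ^ n = Stmt4Aux.wmk [] * Stmt4Aux.C ^ n := by
      rw [Stmt4Aux.wmk_nil, one_mul]
    rw [hCn, Stmt4Aux.canon List.isChain_nil Stmt4Aux.TW_nil n]
    rw [Stmt4Aux.wmk_nil]
    exact hφ.2.2 (x n)
  have hfin := hp (c ^ n)
  rw [hfn] at hfin
  rw [dist_comm]
  exact hfin
end

section
/- A Borel probability measure μ on X is compatible with the persistent shadowing property for φ if and only if μ belongs to ⋂_{n∈ℕ} ⋃_{m∈ℕ} ⋂_{l∈ℕ} C_{PSh(φ)}(1/m, 1/n + 1/l), where C_{PSh(φ)}(δ,ε) = {μ ∈ M(X) : μ(PSh_φ(δ,ε)) = 1}. -/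
open MeasureTheory

lemma PShSet_anti {G : Type*} [Group G] {X : Type*} [MetricSpace X]
    (S : Set G) (φ : G → X → X) {δ₁ δ₂ ε₁ ε₂ : ℝ} (hδ : δ₁ ≤ δ₂) (hε : ε₁ ≤ ε₂) :
    PShSet S φ δ₂ ε₁ ⊆ PShSet S φ δ₁ ε₂ := by
  intro x hx ψ hψ hclose f hf hf1
  obtain ⟨p, hp⟩ := hx ψ hψ (fun s hs y => (hclose s hs y).trans_le hδ) f
    (fun s hs g => (hf s hs g).trans_le hδ) hf1
  exact ⟨p, fun g => (hp g).trans_le hε⟩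

lemma unif_aux {G : Type*} {X : Type*} [MetricSpace X] [CompactSpace X]
    {S : Set G} (hSfin : S.Finite) {φ : G → X → X} (hφc : ∀ g, Continuous (φ g))
    {c : ℝ} (hc : 0 < c) :
    ∃ r > (0:ℝ), ∀ s ∈ S, ∀ x y : X, dist x y < r → dist (φ s x) (φ s y) < c := by
  classical
  have H : ∀ s : G, ∃ r > (0:ℝ), ∀ x y : X, dist x y < r → dist (φ s x) (φ s y) < c := by
    intro s
    exact Metric.uniformContinuous_iff.mp
      (CompactSpace.uniformContinuous_of_continuous (hφc s)) c hc
  choose r hr hr2 using H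
  set T := hSfin.toFinset with hT
  have hne : ((insert (1:ℝ) (T.image r))).Nonempty := ⟨1, Finset.mem_insert_self _ _⟩
  refine ⟨(insert (1:ℝ) (T.image r)).min' hne, ?_, ?_⟩
  · rw [gt_iff_lt, Finset.lt_min'_iff]
    intro b hb
    rcases Finset.mem_insert.mp hb with h | h
    · subst h; norm_num
    · obtain ⟨s, _, rfl⟩ := Finset.mem_image.mp h
      exact hr s
  · intro s hs x y hxy
    have hmem : r s ∈ insert (1:ℝ) (T.image r) :=
      Finset.mem_insert_of_mem (Finset.mem_image_of_mem r (hSfin.mem_toFinset.mpr hs))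
    exact hr2 s x y (hxy.trans_le (Finset.min'_le _ _ hmem))

lemma PShSet_key {G : Type*} [Group G] {X : Type*} [MetricSpace X] [CompactSpace X]
    (S : Set G) (hSfin : S.Finite) (φ : G → X → X) (hφ : ContGroupAction G X φ)
    {δ₀ : ℝ} (hδ₀ : 0 < δ₀) :
    ∃ δ' > (0:ℝ), δ' ≤ δ₀ ∧ ∀ η > (0:ℝ), ∃ r > (0:ℝ), ∀ ε : ℝ, ∀ x x' : X,
      x' ∈ PShSet S φ δ₀ ε → dist x x' < r → x ∈ PShSet S φ δ' (ε + η) := by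
  classical
  obtain ⟨r₀, hr₀, hr₀prop⟩ := unif_aux hSfin hφ.1 (show (0:ℝ) < δ₀/4 by linarith)
  refine ⟨δ₀/4, by linarith, by linarith, ?_⟩
  intro η hη
  refine ⟨min (min η r₀) (δ₀/2), by positivity, ?_⟩
  intro ε x x' hx' hd ψ hψ hclose f hf hf1
  have hdη : dist x x' < η := hd.trans_le ((min_le_left _ _).trans (min_le_left _ _))
  have hdr₀ : dist x x' < r₀ := hd.trans_le ((min_le_left _ _).trans (min_le_right _ _))
  have hdδ : dist x x' < δ₀/2 := hd.trans_le (min_le_right _ _)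
  set f' : G → X := fun g => if g = 1 then x' else f g with hf'
  have hf'1 : f' 1 = x' := by simp [hf']
  have hclose₀ : CloseActions S φ ψ δ₀ :=
    fun s hs y => (hclose s hs y).trans_le (by linarith)
  have hfps : IsPseudoOrbit S ψ δ₀ f' := by
    intro s hs g
    have horig := hf s hs g
    by_cases hg : g = 1
    · subst hg
      by_cases hs1 : s = 1
      · subst hs1
        have : f' (1 * 1) = x' := by simp [hf']
        rw [this, hf'1, hψ.2.2 x']
        simpa using hδ₀
      · have h1 : f' (s * 1) = f s := by simp [hf', hs1]
        rw [h1, hf'1]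
        have d1 : dist (f s) (ψ s x) < δ₀/4 := by
          have := hf s hs 1
          rwa [mul_one, hf1] at this
        have d2 : dist (ψ s x) (φ s x) < δ₀/4 := by
          rw [dist_comm]; exact hclose s hs x
        have d3 : dist (φ s x) (φ s x') < δ₀/4 := hr₀prop s hs x x' hdr₀
        have d4 : dist (φ s x') (ψ s x') < δ₀/4 := hclose s hs x'
        have t1 : dist (ψ s x) (ψ s x') ≤
            dist (ψ s x) (φ s x) + dist (φ s x) (φ s x') + dist (φ s x') (ψ s x') :=
          dist_triangle4 _ _ _ _
        have t2 : dist (f s) (ψ s x') ≤ dist (f s) (ψ s x) + dist (ψ s x) (ψ s x') :=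
          dist_triangle _ _ _
        linarith
    · by_cases hsg : s * g = 1
      · have h1 : f' (s * g) = x' := by simp [hf', hsg]
        have h2 : f' g = f g := by simp [hf', hg]
        rw [h1, h2]
        have d1 : dist x (ψ s (f g)) < δ₀/4 := by
          have := hf s hs g
          rwa [hsg, hf1] at this
        have t : dist x' (ψ s (f g)) ≤ dist x' x + dist x (ψ s (f g)) := dist_triangle _ _ _
        rw [dist_comm x' x] at t
        linarith
      · have h1 : f' (s * g) = f (s * g) := by simp [hf', hsg]
        have h2 : f' g = f g := by simp [hf', hg]
        rw [h1, h2]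
        exact horig.trans_le (by linarith)
  obtain ⟨p, hp⟩ := hx' ψ hψ hclose₀ f' hfps hf'1
  refine ⟨p, fun g => ?_⟩
  by_cases hg : g = 1
  · subst hg
    have hp1 := hp 1
    rw [hf'1, hψ.2.2 p] at hp1
    have t : dist (f 1) p ≤ dist (f 1) x' + dist x' p := dist_triangle _ _ _
    rw [hf1] at t ⊢
    rw [hψ.2.2 p]
    linarith
  · have hpg := hp g
    rw [show f' g = f g by simp [hf', hg]] at hpg
    linarith

theorem stmt6 {G : Type*} [Group G] {X : Type*} [MetricSpace X] [CompactSpace X]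
    [MeasurableSpace X] [BorelSpace X]
    (S : Set G) (hSfin : S.Finite) (hSsym : ∀ s ∈ S, s⁻¹ ∈ S)
    (hSgen : Subgroup.closure S = ⊤)
    (φ : G → X → X) (hφ : ContGroupAction G X φ)
    (μ : ProbabilityMeasure X) :
    CompatiblePSh S φ μ.toMeasure ↔
      ∀ n : ℕ, 0 < n → ∃ m : ℕ, 0 < m ∧ ∀ l : ℕ, 0 < l →
        μ.toMeasure (PShSet S φ ((m : ℝ)⁻¹) ((n : ℝ)⁻¹ + (l : ℝ)⁻¹)) = 1 := by
  constructor
  · intro h n hn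
    have hε : (0:ℝ) < (n:ℝ)⁻¹ := by positivity
    obtain ⟨δ₀, hδ₀pos, hδ₀⟩ := h ((n:ℝ)⁻¹) hε
    obtain ⟨δ', hδ'pos, hδ'le, hkey⟩ := PShSet_key S hSfin φ hφ hδ₀pos
    obtain ⟨m, hm⟩ := exists_nat_gt δ'⁻¹
    have hmpos : 0 < m := by
      by_contra hm0
      have : m = 0 := Nat.eq_zero_of_not_pos hm0
      rw [this] at hm
      simp only [Nat.cast_zero] at hm
      have : (0:ℝ) < δ'⁻¹ := by positivity
      linarith
    have hminv : ((m:ℝ))⁻¹ ≤ δ' := by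
      have hm0 : (0:ℝ) < m := by exact_mod_cast hmpos
      have := inv_strictAnti₀ (by positivity) hm
      rw [inv_inv] at this
      exact this.le
    refine ⟨m, hmpos, ?_⟩
    intro l hl
    have hη : (0:ℝ) < (l:ℝ)⁻¹ := by positivity
    obtain ⟨r, hr, hrkey⟩ := hkey ((l:ℝ)⁻¹) hη
    set K : Set X := PShSet S φ δ₀ ((n:ℝ)⁻¹) with hK
    have hKne : K.Nonempty := by
      have := hδ₀ Set.univ MeasurableSet.univ (by simp)
      obtain ⟨x, _, hx⟩ := this
      exact ⟨x, hx⟩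
    set P : Set X := PShSet S φ ((m:ℝ)⁻¹) ((n:ℝ)⁻¹ + (l:ℝ)⁻¹) with hP
    set C : Set X := {x | r ≤ Metric.infDist x K} with hC
    have hCclosed : IsClosed C := isClosed_le continuous_const (Metric.continuous_infDist_pt K)
    have hCK : C ∩ K = ∅ := by
      ext x
      simp only [Set.mem_inter_iff, Set.mem_empty_iff_false, iff_false, not_and]
      intro hxC hxK
      have h0 : Metric.infDist x K = 0 := Metric.infDist_zero_of_mem hxK
      rw [hC] at hxC
      simp only [Set.mem_setOf_eq] at hxC
      rw [h0] at hxC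
      linarith
    have hCzero : μ.toMeasure C = 0 := by
      by_contra hC0
      have hpos : 0 < μ.toMeasure C := pos_iff_ne_zero.mpr hC0
      obtain ⟨x, hxC, hxK⟩ := hδ₀ C hCclosed.measurableSet hpos
      have : x ∈ C ∩ K := ⟨hxC, hxK⟩
      rw [hCK] at this
      exact this
    have hsub : Cᶜ ⊆ P := by
      intro x hx
      simp only [hC, Set.mem_compl_iff, Set.mem_setOf_eq, not_le] at hx
      obtain ⟨x', hx'K, hdx⟩ := (Metric.infDist_lt_iff hKne).mp hx
      have hx'' : x ∈ PShSet S φ δ' ((n:ℝ)⁻¹ + (l:ℝ)⁻¹) := hrkey _ x x' hx'K hdx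
      exact PShSet_anti S φ hminv le_rfl hx''
    have h1 : μ.toMeasure Cᶜ = 1 := by
      rw [measure_compl hCclosed.measurableSet (measure_ne_top _ _), hCzero]
      simp
    refine le_antisymm (prob_le_one) ?_
    calc (1:ENNReal) = μ.toMeasure Cᶜ := h1.symm
      _ ≤ μ.toMeasure P := measure_mono hsub
  · intro h ε hε
    obtain ⟨n, hn⟩ := exists_nat_one_div_lt (half_pos hε)
    have hn' : ((n+1:ℕ):ℝ)⁻¹ < ε/2 := by
      push_cast
      rw [← one_div]
      exact_mod_cast hn
    obtain ⟨m, hm0, hP⟩ := h (n+1) (Nat.succ_pos n)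
    have hm0' : (0:ℝ) < (m:ℝ)⁻¹ := by
      have : (0:ℝ) < m := by exact_mod_cast hm0
      positivity
    refine ⟨(m:ℝ)⁻¹, hm0', ?_⟩
    intro A hA hApos
    have h1 := hP (n+1) (Nat.succ_pos n)
    set P : Set X := PShSet S φ ((m:ℝ)⁻¹) (((n+1:ℕ):ℝ)⁻¹ + ((n+1:ℕ):ℝ)⁻¹) with hPdef
    have hPsub : P ⊆ PShSet S φ ((m:ℝ)⁻¹) ε :=
      PShSet_anti S φ le_rfl (by linarith)
    have hne : (A ∩ P).Nonempty := by
      by_contra hcon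
      rw [Set.not_nonempty_iff_eq_empty] at hcon
      have hPA : P ⊆ Aᶜ := by
        intro x hx
        intro hxA
        have : x ∈ A ∩ P := ⟨hxA, hx⟩
        rw [hcon] at this
        exact this
      have hcompl : μ.toMeasure Aᶜ < 1 := by
        rw [measure_compl hA (measure_ne_top _ _)]
        simp only [measure_univ]
        exact ENNReal.sub_lt_self ENNReal.one_ne_top one_ne_zero hApos.ne'
      have := (measure_mono hPA).trans_lt hcompl
      rw [h1] at this
      exact lt_irrefl _ this
    obtain ⟨x, hxA, hxP⟩ := hne
    exact ⟨x, hxA, hPsub hxP⟩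
end

section
/- If h: X → Y is a homeomorphism of compact metric spaces and μ is a Borel probability measure compatible with the persistent shadowing property for the action φ: G × X → X, then the pushforward h_*(μ) is compatible with the persistent shadowing property for the conjugated action h∘φ∘h⁻¹: G × Y → Y defined by (g,y) ↦ h(φ(g, h⁻¹(y))). -/
open MeasureTheory

theorem stmt8 {G : Type*} [Group G] {X : Type*} [MetricSpace X] [CompactSpace X]
    [MeasurableSpace X] [BorelSpace X]
    {Y : Type*} [MetricSpace Y] [CompactSpace Y] [MeasurableSpace Y] [BorelSpace Y]
    (S : Set G) (hSfin : S.Finite) (hSsym : ∀ s ∈ S, s⁻¹ ∈ S)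
    (hSgen : Subgroup.closure S = ⊤)
    (φ : G → X → X) (hφ : ContGroupAction G X φ)
    (h : X ≃ₜ Y) (μ : Measure X) [IsProbabilityMeasure μ]
    (hμ : CompatiblePSh S φ μ) :
    CompatiblePSh S (fun g y => h (φ g (h.symm y))) (Measure.map h μ) := by
  intro ε hε
  obtain ⟨ε', hε', hεimp⟩ := Metric.uniformContinuous_iff.mp
    (CompactSpace.uniformContinuous_of_continuous h.continuous) ε hε
  obtain ⟨δ', hδ', hA⟩ := hμ ε' hε'
  obtain ⟨δ, hδ, hδimp⟩ := Metric.uniformContinuous_iff.mp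
    (CompactSpace.uniformContinuous_of_continuous h.symm.continuous) δ' hδ'
  refine ⟨δ, hδ, ?_⟩
  intro B hB hBpos
  have hmap : Measure.map h μ B = μ (h ⁻¹' B) :=
    Measure.map_apply h.continuous.measurable hB
  have hpos : 0 < μ (h ⁻¹' B) := by rwa [hmap] at hBpos
  obtain ⟨x, hxA, hxP⟩ := hA (h ⁻¹' B) (hB.preimage h.continuous.measurable) hpos
  refine ⟨h x, hxA, ?_⟩
  intro ψ hψ hclose f hf hf1
  set ψX : G → X → X := fun g x => h.symm (ψ g (h x)) with hψXdef
  have hψX : ContGroupAction G X ψX := by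
    refine ⟨fun g => (h.symm.continuous.comp ((hψ.1 g).comp h.continuous)), ?_, ?_⟩
    · intro g g' x
      simp [ψX, hψ.2.1]
    · intro x; simp [ψX, hψ.2.2]
  have hcloseX : CloseActions S φ ψX δ' := by
    intro s hs x
    have h1 : φ s x = h.symm (h (φ s (h.symm (h x)))) := by simp
    rw [h1]
    exact hδimp (hclose s hs (h x))
  have hfX : IsPseudoOrbit S ψX δ' (fun g => h.symm (f g)) := by
    intro s hs g
    have h2 : ψX s (h.symm (f g)) = h.symm (ψ s (f g)) := by simp [ψX]
    simp only [h2]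
    exact hδimp (hf s hs g)
  obtain ⟨p, hp⟩ := hxP ψX hψX hcloseX _ hfX (by simp [hf1])
  refine ⟨h p, fun g => ?_⟩
  have h3 := hεimp (hp g)
  simpa [ψX] using h3
end

section
/- Let X be a compact metric space without isolated points. If every non-atomic Borel probability measure on X is compatible with the persistent shadowing property for the continuous action φ: G × X → X, then φ has the persistent shadowing property. -/
open MeasureTheory

open MeasureTheory Set Metric

abbrev Cant := ℕ → ZMod 2

noncomputable section
namespace CantAux

instance : IsTopologicalAddGroup (ZMod 2) :=
  { continuous_add := continuous_of_discreteTopology, continuous_neg := continuous_of_discreteTopology }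

instance : MeasurableSpace Cant := borel _
instance : BorelSpace Cant := ⟨rfl⟩

theorem nebot : (nhdsWithin (0 : Cant) {(0:Cant)}ᶜ).NeBot := by
  have h : Filter.Tendsto (fun k : ℕ => (fun n => if n = k then (1 : ZMod 2) else 0 : Cant))
      Filter.atTop (nhdsWithin (0 : Cant) {(0:Cant)}ᶜ) := by
    apply tendsto_nhdsWithin_of_tendsto_nhds_of_eventually_within
    · rw [tendsto_pi_nhds]
      intro n
      apply tendsto_nhds_of_eventually_eq
      filter_upwards [Filter.eventually_gt_atTop n] with k hk
      simp [Nat.ne_of_lt hk]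
    · filter_upwards with k
      intro h0
      have := congrFun h0 k
      simp at this
  exact h.neBot

instance : (nhdsWithin (0 : Cant) {(0:Cant)}ᶜ).NeBot := nebot

def K0 : TopologicalSpace.PositiveCompacts Cant := ⊤

def μC : Measure Cant := Measure.addHaarMeasure K0

instance : IsProbabilityMeasure μC := by
  constructor
  have : (K0 : Set Cant) = univ := rfl
  rw [← this, μC, Measure.addHaarMeasure_self]

instance : NullSingletonClass μC := by
  unfold μC; infer_instance

/-- The map Cant → (ℕ → Bool). -/
def toBool : Cant → (ℕ → Bool) := fun a n => decide (a n = 1)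

theorem toBool_continuous : Continuous toBool := by
  apply continuous_pi
  intro n
  exact Continuous.comp (continuous_of_discreteTopology
    (f := fun z : ZMod 2 => decide (z = 1))) (continuous_apply n)

theorem toBool_injective : Function.Injective toBool := by
  intro a b h
  funext n
  have h2 : (a n = 1) ↔ (b n = 1) := decide_eq_decide.mp (congrFun h n)
  have hz : ∀ z : ZMod 2, z = 0 ∨ z = 1 := by decide
  rcases hz (a n) with ha | ha <;> rcases hz (b n) with hb | hb <;>
    simp_all

/-- Key lemma: pushforward into a nonempty perfect closed set. -/
theorem exists_measure_on {X : Type*} [MetricSpace X] [CompactSpace X]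
    [MeasurableSpace X] [BorelSpace X]
    (hiso : ∀ x : X, Filter.NeBot (nhdsWithin x {x}ᶜ))
    (U : Set X) (hU : IsOpen U) (hne : U.Nonempty) :
    ∃ ν : Measure X, IsProbabilityMeasure ν ∧ (∀ x, ν {x} = 0) ∧
      ∀ B : Set X, MeasurableSet B → closure U ⊆ B → ν B = 1 := by
  have hpre : Preperfect U := by
    intro x hx
    rw [accPt_iff_nhds]
    intro V hV
    have : V ∩ U ∈ nhdsWithin x {x}ᶜ :=
      nhdsWithin_le_nhds (Filter.inter_mem hV (hU.mem_nhds hx))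
    have h2 : (V ∩ U) ∩ {x}ᶜ ∈ nhdsWithin x {x}ᶜ :=
      Filter.inter_mem this self_mem_nhdsWithin
    haveI := hiso x
    obtain ⟨y, ⟨hyVU, hyx⟩⟩ := Filter.nonempty_of_mem h2
    exact ⟨y, hyVU, by simpa using hyx⟩
  have hperf : Perfect (closure U) := hpre.perfect_closure
  have hclne : (closure U).Nonempty := hne.closure
  obtain ⟨f, hfr, hfc, hfi⟩ := hperf.exists_nat_bool_injection hclne
  set g : Cant → X := f ∘ toBool with hg
  have hgc : Continuous g := hfc.comp toBool_continuous
  have hgi : Function.Injective g := hfi.comp toBool_injective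
  have hgm : Measurable g := hgc.measurable
  refine ⟨Measure.map g μC, Measure.isProbabilityMeasure_map hgm.aemeasurable, ?_, ?_⟩
  · intro x
    rw [Measure.map_apply hgm (measurableSet_singleton x)]
    have : (g ⁻¹' {x}).Subsingleton := fun a ha b hb =>
      hgi (ha.trans hb.symm)
    exact this.measure_zero μC
  · intro B hB hUB
    rw [Measure.map_apply hgm hB]
    have : g ⁻¹' B = univ := by
      rw [eq_univ_iff_forall]
      intro a
      exact hUB (hfr ⟨toBool a, rfl⟩)
    rw [this]
    exact measure_univ

end CantAux
end


section GoodMeasure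
open scoped ENNReal
variable {X : Type*} [MetricSpace X] [CompactSpace X] [MeasurableSpace X] [BorelSpace X]

theorem exists_good_measure [Nonempty X]
    (hiso : ∀ x : X, Filter.NeBot (nhdsWithin x {x}ᶜ)) :
    ∃ μ : Measure X, IsProbabilityMeasure μ ∧ (∀ x : X, μ {x} = 0) ∧
      ∀ (x : X) (r : ℝ), 0 < r → 0 < μ (Metric.ball x r) := by
  have : TopologicalSpace.SeparableSpace X := by infer_instance
  set u : ℕ → X := TopologicalSpace.denseSeq X with hu
  have hdense : DenseRange u := TopologicalSpace.denseRange_denseSeq X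
  set q : ℕ ≃ ℕ × ℕ := (Denumerable.eqv (ℕ × ℕ)).symm with hq
  set U : ℕ → Set X := fun k => Metric.ball (u (q k).1) (1 / ((q k).2 + 1)) with hU
  have hUopen : ∀ k, IsOpen (U k) := fun k => isOpen_ball
  have hUne : ∀ k, (U k).Nonempty := fun k =>
    ⟨u (q k).1, mem_ball_self (by positivity)⟩
  choose ν hνprob hνatom hνone using fun k => CantAux.exists_measure_on hiso (U k) (hUopen k) (hUne k)
  set c : ℕ → ℝ≥0∞ := fun k => (2 : ℝ≥0∞)⁻¹ ^ (k + 1) with hc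
  have hcpos : ∀ k, 0 < c k := fun k =>
    ENNReal.pow_pos (ENNReal.inv_pos.mpr ENNReal.ofNat_ne_top) _
  have hcsum : ∑' k, c k = 1 := by
    rw [hc]
    simp only [pow_succ]
    rw [ENNReal.tsum_mul_right, ENNReal.tsum_geometric]
    rw [ENNReal.one_sub_inv_two, inv_inv]
    exact ENNReal.mul_inv_cancel (by norm_num) ENNReal.ofNat_ne_top
  refine ⟨Measure.sum (fun k => c k • ν k), ?_, ?_, ?_⟩
  · constructor
    rw [Measure.sum_apply _ MeasurableSet.univ]
    simp only [Measure.smul_apply, smul_eq_mul]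
    have : ∀ k, ν k univ = 1 := fun k => (hνprob k).measure_univ
    simp only [this, mul_one]
    exact hcsum
  · intro x
    rw [Measure.sum_apply _ (measurableSet_singleton x)]
    simp [hνatom]
  · intro x r hr
    obtain ⟨m, hm⟩ := exists_nat_one_div_lt (by positivity : (0:ℝ) < r / 3)
    obtain ⟨n, hn⟩ := hdense.exists_dist_lt x (by positivity : (0:ℝ) < 1 / (m + 1))
    set k := q.symm (n, m) with hk
    have hqk : q k = (n, m) := q.apply_symm_apply _
    have hsub : closure (U k) ⊆ Metric.ball x r := by
      intro z hz
      have hz' : dist z (u n) ≤ 1 / (m + 1) := by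
        have := Metric.closure_ball_subset_closedBall hz
        rw [hqk] at this
        simpa using this
      have hdist : dist z x < r := by
        calc dist z x ≤ dist z (u n) + dist (u n) x := dist_triangle _ _ _
          _ < 1 / (m + 1) + 1 / (m + 1) := by
              have : dist (u n) x < 1 / (m + 1) := by
                rw [dist_comm]; exact hn
              linarith [hz', this]
          _ < r / 3 + r / 3 := by linarith [hm]
          _ < r := by linarith
      exact mem_ball.mpr hdist
    have hone : ν k (Metric.ball x r) = 1 :=
      hνone k _ measurableSet_ball hsub
    rw [Measure.sum_apply _ measurableSet_ball]
    calc (0 : ℝ≥0∞) < c k := hcpos k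
      _ = c k • ν k (Metric.ball x r) := by rw [hone]; simp
      _ ≤ ∑' j, (c j • ν j) (Metric.ball x r) := by
          exact le_trans (le_of_eq rfl) (ENNReal.le_tsum k)

end GoodMeasure

theorem stmt10 {G : Type*} [Group G] {X : Type*} [MetricSpace X] [CompactSpace X]
    [MeasurableSpace X] [BorelSpace X]
    (hiso : ∀ x : X, Filter.NeBot (nhdsWithin x {x}ᶜ))
    (S : Set G) (hSfin : S.Finite) (hSsym : ∀ s ∈ S, s⁻¹ ∈ S)
    (hSgen : Subgroup.closure S = ⊤)
    (φ : G → X → X) (hφ : ContGroupAction G X φ)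
    (hall : ∀ μ : Measure X, IsProbabilityMeasure μ → (∀ x : X, μ {x} = 0) →
      CompatiblePSh S φ μ) :
    PersistentShadowing S φ := by
  rcases isEmpty_or_nonempty X with hX | hX
  · intro ε hε
    exact ⟨1, one_pos, fun ψ _ _ f _ => (IsEmpty.false (f 1)).elim⟩
  -- uniform continuity modulus over finite S
  have hunif : ∀ η : ℝ, 0 < η → ∃ θ : ℝ, 0 < θ ∧
      ∀ s ∈ S, ∀ x y : X, dist x y < θ → dist (φ s x) (φ s y) < η := by
    intro η hη
    have huc : ∀ s : G, ∃ θ : ℝ, 0 < θ ∧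
        ∀ x y : X, dist x y < θ → dist (φ s x) (φ s y) < η := by
      intro s
      have := CompactSpace.uniformContinuous_of_continuous (hφ.1 s)
      obtain ⟨θ, hθpos, hθ⟩ := Metric.uniformContinuous_iff.mp this η hη
      exact ⟨θ, hθpos, fun x y h => hθ h⟩
    choose θ hθpos hθ using huc
    classical
    set T := hSfin.toFinset with hT
    by_cases hTne : T.Nonempty
    · refine ⟨T.inf' hTne θ, ?_, ?_⟩
      · rw [Finset.lt_inf'_iff]
        exact fun s _ => hθpos s
      · intro s hs x y hxy
        have hsT : s ∈ T := hSfin.mem_toFinset.mpr hs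
        have : T.inf' hTne θ ≤ θ s := Finset.inf'_le θ hsT
        exact hθ s x y (lt_of_lt_of_le hxy this)
    · refine ⟨1, one_pos, ?_⟩
      intro s hs x y _
      exact absurd (hSfin.mem_toFinset.mpr hs) (fun h => hTne ⟨s, h⟩)
  obtain ⟨μ, hprob, hatom, hsupp⟩ := exists_good_measure hiso
  intro ε hε
  obtain ⟨δ, hδpos, hδ⟩ := hall μ hprob hatom (ε/2) (by linarith)
  obtain ⟨θ, hθpos, hθ⟩ := hunif (δ/4) (by linarith)
  set δ' := min (min (δ/4) θ) (ε/2) with hδ'def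
  have hδ'pos : 0 < δ' := lt_min (lt_min (by linarith) hθpos) (by linarith)
  have hδ'le4 : δ' ≤ δ/4 := le_trans (min_le_left _ _) (min_le_left _ _)
  have hδ'leθ : δ' ≤ θ := le_trans (min_le_left _ _) (min_le_right _ _)
  have hδ'leε : δ' ≤ ε/2 := min_le_right _ _
  have hδ'leδ : δ' ≤ δ := le_trans hδ'le4 (by linarith)
  refine ⟨δ', hδ'pos, ?_⟩
  intro ψ hψ hclose f hf
  set x := f 1 with hx
  have hball : 0 < μ (ball x δ') := hsupp x δ' hδ'pos
  obtain ⟨y, hyA, hyP⟩ := hδ (ball x δ') measurableSet_ball hball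
  have hyx : dist y x < δ' := mem_ball.mp hyA
  classical
  set f' := Function.update f 1 y with hf'def
  have hf'1 : f' 1 = y := Function.update_self 1 y f
  have hclose' : CloseActions S φ ψ δ :=
    fun s hs z => lt_of_lt_of_le (hclose s hs z) hδ'leδ
  have hpo : IsPseudoOrbit S ψ δ f' := by
    intro s hs g
    by_cases hg : g = 1
    · subst hg
      by_cases hs1 : s = 1
      · subst hs1
        rw [one_mul, hψ.2.2 (f' 1)]
        simpa using hδpos
      · have hsg1 : s * 1 ≠ 1 := by rwa [mul_one]
        rw [hf'def, Function.update_of_ne hsg1, Function.update_self, mul_one]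
        have h1 : dist (f s) (ψ s x) < δ' := by
          have := hf s hs 1; rwa [mul_one, ← hx] at this
        have h2 : dist (ψ s x) (φ s x) < δ' := by
          rw [dist_comm]; exact hclose s hs x
        have h3 : dist (φ s x) (φ s y) < δ/4 :=
          hθ s hs x y (by rw [dist_comm]; exact lt_of_lt_of_le hyx hδ'leθ)
        have h4 : dist (φ s y) (ψ s y) < δ' := hclose s hs y
        calc dist (f s) (ψ s y) ≤ dist (f s) (ψ s x) + dist (ψ s x) (ψ s y) :=
              dist_triangle _ _ _
          _ ≤ dist (f s) (ψ s x) + (dist (ψ s x) (φ s x) + dist (φ s x) (φ s y)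
                + dist (φ s y) (ψ s y)) := by
              have := dist_triangle4 (ψ s x) (φ s x) (φ s y) (ψ s y)
              linarith
          _ < δ' + (δ' + δ/4 + δ') := by linarith
          _ ≤ δ := by linarith
    · by_cases hsg : s * g = 1
      · rw [hf'def, hsg, Function.update_self, Function.update_of_ne hg]
        have h1 : dist (f 1) (ψ s (f g)) < δ' := by
          have := hf s hs g; rwa [hsg] at this
        calc dist y (ψ s (f g)) ≤ dist y (f 1) + dist (f 1) (ψ s (f g)) :=
              dist_triangle _ _ _
          _ < δ' + δ' := by
              have : dist y (f 1) < δ' := by rw [← hx]; exact hyx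
              linarith
          _ ≤ δ := by linarith
      · rw [hf'def, Function.update_of_ne hsg, Function.update_of_ne hg]
        exact lt_of_lt_of_le (hf s hs g) hδ'leδ
  obtain ⟨p, hp⟩ := hyP ψ hψ hclose' f' hpo hf'1
  refine ⟨p, fun g => ?_⟩
  by_cases hg : g = 1
  · subst hg
    have hpy : dist y (ψ 1 p) < ε/2 := by
      have := hp 1; rwa [hf'1] at this
    calc dist (f 1) (ψ 1 p) ≤ dist (f 1) y + dist y (ψ 1 p) := dist_triangle _ _ _
      _ < δ' + ε/2 := by
          have : dist (f 1) y < δ' := by rw [dist_comm, ← hx]; exact hyx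
          linarith
      _ ≤ ε := by linarith
  · have := hp g
    rw [hf'def, Function.update_of_ne hg] at this
    linarith [this, hε]
end

section
/- A point p ∈ X is a persistent shadowable point for φ if and only if for every ε > 0 there exists δ > 0 such that every δ-pseudo orbit f: G → X of any continuous action ψ with d_S(φ,ψ) < δ satisfying f(e) ∈ B[p,δ] (the closed δ-ball around p) can be ε-shadowed by a ψ-orbit. -/
open MeasureTheory

lemma exists_unif_mod {X : Type*} [MetricSpace X] [CompactSpace X] {G : Type*}
    (S : Set G) (hS : S.Finite) (φ : G → X → X) (hφ : ∀ g, Continuous (φ g))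
    {η : ℝ} (hη : 0 < η) :
    ∃ ρ > (0:ℝ), ∀ s ∈ S, ∀ a b : X, dist a b < ρ → dist (φ s a) (φ s b) < η := by
  refine Set.Finite.induction_on (motive := fun S _ => ∃ ρ > (0:ℝ), ∀ s ∈ S, ∀ a b : X,
    dist a b < ρ → dist (φ s a) (φ s b) < η) S hS ⟨1, one_pos, by simp⟩ ?_
  rintro a s ha hs ⟨ρ₁, hρ₁, h₁⟩
  obtain ⟨ρ₂, hρ₂, h₂⟩ := Metric.uniformContinuous_iff.mp
    (CompactSpace.uniformContinuous_of_continuous (hφ a)) η hη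
  refine ⟨min ρ₁ ρ₂, lt_min hρ₁ hρ₂, ?_⟩
  rintro t ht x y hxy
  rcases ht with rfl | ht
  · exact h₂ (lt_of_lt_of_le hxy (min_le_right _ _))
  · exact h₁ t ht x y (lt_of_lt_of_le hxy (min_le_left _ _))

theorem stmt11 {G : Type*} [Group G] {X : Type*} [MetricSpace X] [CompactSpace X]
    (S : Set G) (hSfin : S.Finite) (hSsym : ∀ s ∈ S, s⁻¹ ∈ S)
    (hSgen : Subgroup.closure S = ⊤)
    (φ : G → X → X) (hφ : ContGroupAction G X φ) (p : X) :
    PShPoint S φ p ↔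
      ∀ ε > (0:ℝ), ∃ δ > (0:ℝ), ∀ ψ : G → X → X, ContGroupAction G X ψ →
        CloseActions S φ ψ δ → ∀ f : G → X, IsPseudoOrbit S ψ δ f →
          dist (f 1) p ≤ δ → ∃ z : X, ∀ g : G, dist (f g) (ψ g z) < ε := by
  constructor
  · intro h ε hε
    obtain ⟨δ₀, hδ₀, hsh⟩ := h (ε/2) (by linarith)
    obtain ⟨ρ, hρ, hunif⟩ := exists_unif_mod S hSfin φ hφ.1 (show (0:ℝ) < δ₀/3 by linarith)
    refine ⟨min (min (δ₀/9) (ρ/2)) (ε/4), by positivity, ?_⟩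
    set δ := min (min (δ₀/9) (ρ/2)) (ε/4) with hδdef
    have hδ9 : δ ≤ δ₀/9 := le_trans (min_le_left _ _) (min_le_left _ _)
    have hδρ : δ ≤ ρ/2 := le_trans (min_le_left _ _) (min_le_right _ _)
    have hδε : δ ≤ ε/4 := min_le_right _ _
    intro ψ hψ hclose f hf hfp
    classical
    set f' : G → X := fun g => if g = 1 then p else f g with hf'def
    have hclose' : CloseActions S φ ψ δ₀ := fun s hs x =>
      lt_of_lt_of_le (hclose s hs x) (by linarith)
    have hpo : IsPseudoOrbit S ψ δ₀ f' := by
      intro s hs g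
      by_cases hg : g = 1
      · subst hg
        by_cases hs1 : s = 1
        · subst hs1
          simp only [hf'def, mul_one, if_pos rfl]
          rw [hψ.2.2 p]
          simpa using hδ₀
        · have h1 : f' (s * 1) = f s := by simp [hf'def, hs1]
          have h2 : f' 1 = p := by simp [hf'def]
          rw [h1, h2]
          have ha : dist (f s) (ψ s (f 1)) < δ := by simpa using hf s hs 1
          have hb : dist (ψ s (f 1)) (φ s (f 1)) < δ := by
            rw [dist_comm]; exact hclose s hs (f 1)
          have hc : dist (φ s (f 1)) (φ s p) < δ₀/3 :=
            hunif s hs _ _ (lt_of_le_of_lt hfp (by linarith))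
          have hd : dist (φ s p) (ψ s p) < δ := hclose s hs p
          have he : dist (ψ s (f 1)) (ψ s p) ≤ dist (ψ s (f 1)) (φ s (f 1))
              + dist (φ s (f 1)) (φ s p) + dist (φ s p) (ψ s p) := dist_triangle4 _ _ _ _
          have hfm : dist (f s) (ψ s p) ≤ dist (f s) (ψ s (f 1)) + dist (ψ s (f 1)) (ψ s p) :=
            dist_triangle _ _ _
          linarith
      · by_cases hsg : s * g = 1
        · have h1 : f' (s * g) = p := by simp [hf'def, hsg]
          have h2 : f' g = f g := by simp [hf'def, hg]
          rw [h1, h2]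
          have ha : dist (f (s * g)) (ψ s (f g)) < δ := hf s hs g
          rw [hsg] at ha
          have hb : dist p (f 1) ≤ δ := by rw [dist_comm]; exact hfp
          have hc : dist p (ψ s (f g)) ≤ dist p (f 1) + dist (f 1) (ψ s (f g)) :=
            dist_triangle _ _ _
          linarith
        · have h1 : f' (s * g) = f (s * g) := by simp [hf'def, hsg]
          have h2 : f' g = f g := by simp [hf'def, hg]
          rw [h1, h2]
          exact lt_of_lt_of_le (hf s hs g) (by linarith)
    obtain ⟨z, hz⟩ := hsh ψ hψ hclose' f' hpo (by simp [hf'def])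
    refine ⟨z, fun g => ?_⟩
    by_cases hg : g = 1
    · subst hg
      have := hz 1
      simp only [hf'def, if_pos rfl] at this
      calc dist (f 1) (ψ 1 z) ≤ dist (f 1) p + dist p (ψ 1 z) := dist_triangle _ _ _
        _ < δ + ε/2 := by linarith [hfp]
        _ < ε := by linarith
    · have := hz g
      simp only [hf'def, if_neg hg] at this
      linarith
  · intro h ε hε
    obtain ⟨δ, hδ, H⟩ := h ε hε
    refine ⟨δ, hδ, fun ψ hψ hc f hf h1 => H ψ hψ hc f hf ?_⟩
    rw [h1]
    simpa using hδ.le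
end

section
/- A continuous action φ: G × X → X on a compact metric space has the persistent shadowing property on a compact set K ⊆ X if and only if every point of K is a persistent shadowable point, i.e., K ⊆ PSh(φ). -/
open MeasureTheory

lemma modulus_aux {G : Type*} {X : Type*} [MetricSpace X] [CompactSpace X]
    (S : Set G) (hSfin : S.Finite) (φ : G → X → X) (hc : ∀ g : G, Continuous (φ g))
    {r : ℝ} (hr : 0 < r) :
    ∃ η > (0:ℝ), ∀ s ∈ S, ∀ a b : X, dist a b < η → dist (φ s a) (φ s b) < r := by
  have h : ∀ s : G, ∃ η > (0:ℝ), ∀ a b : X, dist a b < η → dist (φ s a) (φ s b) < r := by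
    intro s
    have := CompactSpace.uniformContinuous_of_continuous (hc s)
    rcases Metric.uniformContinuous_iff.mp this r hr with ⟨η, hη, h⟩
    exact ⟨η, hη, fun a b hab => h hab⟩
  choose η hη hmod using h
  rcases eq_or_ne S ∅ with hS | hS
  · exact ⟨1, one_pos, by simp [hS]⟩
  · have hne : hSfin.toFinset.Nonempty := by
      rcases Set.nonempty_iff_ne_empty.mpr hS with ⟨s, hs⟩
      exact ⟨s, hSfin.mem_toFinset.mpr hs⟩
    refine ⟨hSfin.toFinset.inf' hne η, ?_, ?_⟩
    · exact (Finset.lt_inf'_iff hne).mpr fun s _ => hη s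
    · intro s hs a b hab
      exact hmod s a b (lt_of_lt_of_le hab (Finset.inf'_le η (hSfin.mem_toFinset.mpr hs)))

theorem stmt12 {G : Type*} [Group G] {X : Type*} [MetricSpace X] [CompactSpace X]
    (S : Set G) (hSfin : S.Finite) (hSsym : ∀ s ∈ S, s⁻¹ ∈ S)
    (hSgen : Subgroup.closure S = ⊤)
    (φ : G → X → X) (hφ : ContGroupAction G X φ)
    (K : Set X) (hK : IsCompact K) :
    (∀ ε > (0:ℝ), ∃ δ > (0:ℝ), ∀ ψ : G → X → X, ContGroupAction G X ψ →
      CloseActions S φ ψ δ → ∀ f : G → X, IsPseudoOrbit S ψ δ f →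
        f 1 ∈ K → ∃ p : X, ∀ g : G, dist (f g) (ψ g p) < ε) ↔
      K ⊆ {x : X | PShPoint S φ x} := by
  constructor
  · intro H x hx ε hε
    rcases H ε hε with ⟨δ, hδ, h⟩
    exact ⟨δ, hδ, fun ψ hψ hclose f hf hf1 => h ψ hψ hclose f hf (hf1 ▸ hx)⟩
  · intro H ε hε
    classical
    -- for each x, choose δ and η
    have hsel : ∀ x : X, ∃ δ η : ℝ, 0 < δ ∧ 0 < η ∧ (x ∈ K →
        (δ ≤ ε/2 ∧ x ∈ PShSet S φ δ (ε/2) ∧ η ≤ δ/4 ∧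
          ∀ s ∈ S, ∀ a b : X, dist a b < η → dist (φ s a) (φ s b) < δ/4)) := by
      intro x
      by_cases hx : x ∈ K
      · rcases H hx (ε/2) (by linarith) with ⟨δ₀, hδ₀, hδ₀mem⟩
        set δ := min δ₀ (ε/2) with hδdef
        have hδpos : 0 < δ := lt_min hδ₀ (by linarith)
        have hmem : x ∈ PShSet S φ δ (ε/2) := by
          intro ψ hψ hclose f hf hf1
          refine hδ₀mem ψ hψ ?_ f ?_ hf1
          · intro s hs y
            exact lt_of_lt_of_le (hclose s hs y) (min_le_left _ _)
          · intro s hs g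
            exact lt_of_lt_of_le (hf s hs g) (min_le_left _ _)
        rcases modulus_aux S hSfin φ hφ.1 (r := δ/4) (by linarith) with ⟨η₀, hη₀, hmod⟩
        refine ⟨δ, min η₀ (δ/4), hδpos, lt_min hη₀ (by linarith), fun _ =>
          ⟨min_le_right _ _, hmem, min_le_right _ _, fun s hs a b hab =>
            hmod s hs a b (lt_of_lt_of_le hab (min_le_left _ _))⟩⟩
      · exact ⟨1, 1, one_pos, one_pos, fun h => absurd h hx⟩
    choose δf ηf hδf hηf hprop using hsel
    -- finite subcover
    obtain ⟨t, htK, htcov⟩ := hK.elim_nhds_subcover (fun x => Metric.ball x (ηf x))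
      (fun x _ => Metric.ball_mem_nhds x (hηf x))
    by_cases ht : t.Nonempty
    · set δ := t.inf' ht (fun x => min (ηf x) (δf x / 4)) with hδdef
      have hδpos : 0 < δ := by
        rw [hδdef, Finset.lt_inf'_iff]
        exact fun x _ => lt_min (hηf x) (by have := hδf x; linarith)
      refine ⟨δ, hδpos, ?_⟩
      intro ψ hψ hclose f hf hf1K
      have hf1 : f 1 ∈ ⋃ x ∈ t, Metric.ball x (ηf x) := htcov hf1K
      simp only [Set.mem_iUnion, Metric.mem_ball] at hf1
      obtain ⟨i, hit, hfi⟩ := hf1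
      have hiK : i ∈ K := htK i hit
      obtain ⟨hδle, himem, hηle, hmod⟩ := hprop i hiK
      have hδi : δ ≤ min (ηf i) (δf i / 4) := Finset.inf'_le _ hit
      have hδη : δ ≤ ηf i := le_trans hδi (min_le_left _ _)
      have hδq : δ ≤ δf i / 4 := le_trans hδi (min_le_right _ _)
      have hδfi := hδf i
      -- modified pseudo orbit through i
      set f' : G → X := fun g => if g = 1 then i else f g with hf'def
      have hf'po : IsPseudoOrbit S ψ (δf i) f' := by
        intro s hs g
        by_cases hg : g = 1
        · subst hg
          by_cases hs1 : s * 1 = 1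
          · have hs1' : s = 1 := by simpa using hs1
            subst hs1'
            simp only [hf'def, if_pos rfl, one_mul]
            rw [hψ.2.2 i]
            simpa using (by linarith : (0:ℝ) < δf i)
          · have hs1' : ¬ s = 1 := by simpa using hs1
            simp only [hf'def, mul_one, if_neg hs1', if_pos rfl]
            have h1 : dist (f s) (ψ s (f 1)) < δ := by
              simpa using hf s hs 1
            have h2 : dist (ψ s (f 1)) (φ s (f 1)) < δ := by
              rw [dist_comm]; exact hclose s hs (f 1)
            have h3 : dist (φ s (f 1)) (φ s i) < δf i / 4 :=
              hmod s hs (f 1) i hfi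
            have h4 : dist (φ s i) (ψ s i) < δ := hclose s hs i
            have hA : dist (f s) (φ s (f 1)) ≤
                dist (f s) (ψ s (f 1)) + dist (ψ s (f 1)) (φ s (f 1)) := dist_triangle _ _ _
            have hB : dist (f s) (ψ s i) ≤ dist (f s) (φ s (f 1))
                + dist (φ s (f 1)) (φ s i) + dist (φ s i) (ψ s i) := dist_triangle4 _ _ _ _
            linarith
        · by_cases hsg : s * g = 1
          · simp only [hf'def, if_pos hsg, if_neg hg]
            have h1 : dist i (f 1) < ηf i := by rw [dist_comm]; exact hfi
            have h2 : dist (f 1) (ψ s (f g)) < δ := by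
              rw [← hsg]; exact hf s hs g
            calc dist i (ψ s (f g)) ≤ dist i (f 1) + dist (f 1) (ψ s (f g)) :=
                dist_triangle _ _ _
              _ < ηf i + δ := by linarith
              _ ≤ δf i := by linarith
          · simp only [hf'def, if_neg hsg, if_neg hg]
            exact lt_of_lt_of_le (hf s hs g) (by linarith)
      have hclose' : CloseActions S φ ψ (δf i) := fun s hs x =>
        lt_of_lt_of_le (hclose s hs x) (by linarith)
      obtain ⟨p, hp⟩ := himem ψ hψ hclose' f' hf'po (by simp [hf'def])
      refine ⟨p, fun g => ?_⟩
      by_cases hg : g = 1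
      · subst hg
        have h1 := hp 1
        simp only [hf'def, if_pos rfl] at h1
        calc dist (f 1) (ψ 1 p) ≤ dist (f 1) i + dist i (ψ 1 p) := dist_triangle _ _ _
          _ < ηf i + ε/2 := by linarith
          _ ≤ ε := by linarith
      · have h1 := hp g
        simp only [hf'def, if_neg hg] at h1
        linarith
    · -- t empty: K must be empty
      refine ⟨1, one_pos, fun ψ _ _ f _ hf1K => absurd (htcov hf1K) ?_⟩
      rw [Finset.not_nonempty_iff_eq_empty] at ht
      simp [ht]
end

section
/- For a continuous action φ: G × X → X on a compact metric space, the set of persistent shadowable points equals the intersection of the set of uniformly β-persistent points and the set of shadowable points: PSh(φ) = UPersis_β(φ) ∩ Sh(φ). -/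
open MeasureTheory

theorem stmt14 {G : Type*} [Group G] {X : Type*} [MetricSpace X] [CompactSpace X]
    (S : Set G) (hSfin : S.Finite) (hSsym : ∀ s ∈ S, s⁻¹ ∈ S)
    (hSgen : Subgroup.closure S = ⊤)
    (φ : G → X → X) (hφ : ContGroupAction G X φ) :
    {x : X | PShPoint S φ x} =
      {x : X | UPersisBetaPoint S φ x} ∩ {x : X | ShPoint S φ x} := by
  classical
  ext x
  simp only [Set.mem_setOf_eq, Set.mem_inter_iff]
  constructor
  · intro hx
    constructor
    · -- PSh → UPersis
      intro ε hε
      obtain ⟨δ, hδ, hxδ⟩ := hx (ε / 2) (by linarith)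
      have hcont : ∀ᶠ x' in nhds x, ∀ s ∈ S, dist (φ s x') (φ s x) < δ / 2 := by
        rw [hSfin.eventually_all]
        intro s _
        exact Metric.tendsto_nhds.mp ((hφ.1 s).continuousAt) (δ / 2) (by linarith)
      rw [Metric.eventually_nhds_iff] at hcont
      obtain ⟨r, hr, hcont⟩ := hcont
      refine ⟨min (min r (ε / 2)) (δ / 2), by positivity, ?_⟩
      intro ψ hψ hclose x' hx'
      set δ' := min (min r (ε / 2)) (δ / 2) with hδ'def
      have hδ'r : δ' ≤ r := le_trans (min_le_left _ _) (min_le_left _ _)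
      have hδ'ε : δ' ≤ ε / 2 := le_trans (min_le_left _ _) (min_le_right _ _)
      have hδ'δ : δ' ≤ δ / 2 := min_le_right _ _
      have hcloseδ : CloseActions S φ ψ δ :=
        fun s hs z => lt_of_lt_of_le (hclose s hs z) (by linarith)
      set f : G → X := fun g => if g = 1 then x else φ g x' with hfdef
      have hpo : IsPseudoOrbit S ψ δ f := by
        intro s hs g
        by_cases hg : g = 1
        · subst hg
          rw [mul_one]
          by_cases hs1 : s = 1
          · subst hs1
            simp only [hfdef, if_pos rfl]
            rw [hψ.2.2 x]
            simpa using hδ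
          · simp only [hfdef, if_neg hs1, if_pos rfl]
            calc dist (φ s x') (ψ s x)
                ≤ dist (φ s x') (φ s x) + dist (φ s x) (ψ s x) := dist_triangle _ _ _
              _ < δ / 2 + δ' := add_lt_add (hcont (lt_of_lt_of_le hx' hδ'r) s hs) (hclose s hs x)
              _ ≤ δ := by linarith
        · by_cases hsg : s * g = 1
          · simp only [hfdef, if_pos hsg, if_neg hg]
            have key : φ s (φ g x') = x' := by rw [← hφ.2.1, hsg, hφ.2.2]
            calc dist x (ψ s (φ g x'))
                ≤ dist x (φ s (φ g x')) + dist (φ s (φ g x')) (ψ s (φ g x')) :=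
                  dist_triangle _ _ _
              _ < δ' + δ' := by
                  have hc := hclose s hs (φ g x')
                  rw [key] at hc
                  rw [key, dist_comm]
                  exact add_lt_add hx' hc
              _ ≤ δ := by linarith
          · simp only [hfdef, if_neg hsg, if_neg hg]
            rw [hφ.2.1]
            exact lt_of_lt_of_le (hclose s hs _) (by linarith)
      obtain ⟨p, hp⟩ := hxδ ψ hψ hcloseδ f hpo (by simp [hfdef])
      refine ⟨p, fun g => ?_⟩
      by_cases hg : g = 1
      · subst hg
        rw [hφ.2.2]
        have h1 := hp 1
        simp only [hfdef, if_pos rfl] at h1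
        calc dist x' (ψ 1 p) ≤ dist x' x + dist x (ψ 1 p) := dist_triangle _ _ _
          _ < δ' + ε / 2 := add_lt_add hx' h1
          _ ≤ ε := by linarith
      · have h1 := hp g
        simp only [hfdef, if_neg hg] at h1
        linarith
    · -- PSh → Sh
      intro ε hε
      obtain ⟨δ, hδ, hxδ⟩ := hx ε hε
      exact ⟨δ, hδ, fun f hf hf1 =>
        hxδ φ hφ (fun s _ y => by simpa using hδ) f hf hf1⟩
  · rintro ⟨hu, hs⟩ ε hε
    obtain ⟨δu, hδu, hu⟩ := hu (ε / 2) (by linarith)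
    obtain ⟨δs, hδs, hs⟩ := hs (min (ε / 2) δu) (lt_min (by linarith) hδu)
    refine ⟨min (δs / 2) δu, by positivity, ?_⟩
    intro ψ hψ hclose f hf hf1
    have hpoφ : IsPseudoOrbit S φ δs f := by
      intro s hsS g
      have h1 := hf s hsS g
      have h2 := hclose s hsS (f g)
      have h3 : min (δs / 2) δu ≤ δs / 2 := min_le_left _ _
      calc dist (f (s * g)) (φ s (f g))
          ≤ dist (f (s * g)) (ψ s (f g)) + dist (ψ s (f g)) (φ s (f g)) := dist_triangle _ _ _
        _ < min (δs / 2) δu + min (δs / 2) δu := by rw [dist_comm (ψ s (f g))]; exact add_lt_add h1 h2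
        _ ≤ δs := by linarith
    obtain ⟨p, hp⟩ := hs f hpoφ hf1
    have hpx : dist p x < δu := by
      have h1 := hp 1
      rw [hf1, hφ.2.2] at h1
      rw [dist_comm]
      exact lt_of_lt_of_le h1 (min_le_right _ _)
    have hcloseu : CloseActions S φ ψ δu :=
      fun s hsS z => lt_of_lt_of_le (hclose s hsS z) (min_le_right _ _)
    obtain ⟨y, hy⟩ := hu ψ hψ hcloseu p hpx
    refine ⟨y, fun g => ?_⟩
    have h1 := hp g
    have h2 := hy g
    have h3 : min (ε / 2) δu ≤ ε / 2 := min_le_left _ _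
    calc dist (f g) (ψ g y) ≤ dist (f g) (φ g p) + dist (φ g p) (ψ g y) := dist_triangle _ _ _
      _ < min (ε / 2) δu + ε / 2 := add_lt_add h1 h2
      _ ≤ ε := by linarith
end

section
/- A continuous action φ: G × X → X on a compact metric space has the persistent shadowing property if and only if it has the shadowing property and is β-persistent. -/
open MeasureTheory

theorem stmt15 {G : Type*} [Group G] {X : Type*} [MetricSpace X] [CompactSpace X]
    (S : Set G) (hSfin : S.Finite) (hSsym : ∀ s ∈ S, s⁻¹ ∈ S)
    (hSgen : Subgroup.closure S = ⊤)
    (φ : G → X → X) (hφ : ContGroupAction G X φ) :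
    PersistentShadowing S φ ↔ Shadowing S φ ∧ BetaPersistent S φ := by
  constructor
  · intro hPS
    constructor
    · intro ε hε
      obtain ⟨δ, hδ, h⟩ := hPS ε hε
      exact ⟨δ, hδ, fun f hf => h φ hφ (fun s _ x => by simp [hδ]) f hf⟩
    · intro ε hε
      obtain ⟨δ, hδ, h⟩ := hPS ε hε
      refine ⟨δ, hδ, fun ψ hψ hclose x => ?_⟩
      have hpo : IsPseudoOrbit S ψ δ (fun g => φ g x) := by
        intro s hs g
        have := hφ.2.1 s g x
        simp only [this]
        exact hclose s hs (φ g x)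
      exact h ψ hψ hclose _ hpo
  · rintro ⟨hSh, hB⟩ ε hε
    obtain ⟨δs, hδs, hs⟩ := hSh (ε / 2) (by linarith)
    obtain ⟨δb, hδb, hb⟩ := hB (ε / 2) (by linarith)
    refine ⟨min (δs / 2) δb, lt_min (by linarith) hδb, ?_⟩
    intro ψ hψ hclose f hf
    have hpo : IsPseudoOrbit S φ δs f := by
      intro s hsS g
      have h1 := hf s hsS g
      have h2 := hclose s hsS (f g)
      have h3 : min (δs / 2) δb ≤ δs / 2 := min_le_left _ _
      calc dist (f (s * g)) (φ s (f g))
          ≤ dist (f (s * g)) (ψ s (f g)) + dist (ψ s (f g)) (φ s (f g)) := dist_triangle _ _ _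
        _ < min (δs / 2) δb + min (δs / 2) δb := by
            have := dist_comm (ψ s (f g)) (φ s (f g)); linarith
        _ ≤ δs := by linarith
    obtain ⟨p, hp⟩ := hs f hpo
    have hclose' : CloseActions S φ ψ δb := fun s hsS x =>
      lt_of_lt_of_le (hclose s hsS x) (min_le_right _ _)
    obtain ⟨y, hy⟩ := hb ψ hψ hclose' p
    refine ⟨y, fun g => ?_⟩
    calc dist (f g) (ψ g y) ≤ dist (f g) (φ g p) + dist (φ g p) (ψ g y) := dist_triangle _ _ _
      _ < ε / 2 + ε / 2 := add_lt_add (hp g) (hy g)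
      _ = ε := by ring
end
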